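/- arXiv:1708.07451 — 3 statements merged into one kernel-verified Lean document; each statement's English description precedes it below -/
import Mathlib

section
/- There exists a numerical constant C > 0 such that for every nonzero s-sparse vector x_0 ∈ ℝ^n (with 1 ≤ s ≤ n) and every nonzero μ ∈ ℝ^M, defining K := {X ∈ ℝ^{n×M} : ‖X‖_{1,2} ≤ ‖x_0·μᵀ‖_{1,2}}, the conic mean width satisfies w₁(cone(K, x_0·μᵀ))² ≤ C · s · max{M, log(2n/s)}. -/
open MeasureTheory ProbabilityTheory

noncomputable section

/-- Euclidean inner product on `ι → ℝ`. -/
def dotp {ι : Type*} [Fintype ι] (x y : ι → ℝ) : ℝ := ∑ i, x i * y i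

/-- Euclidean norm on `ι → ℝ`. -/
def enorm2 {ι : Type*} [Fintype ι] (x : ι → ℝ) : ℝ := Real.sqrt (∑ i, (x i) ^ 2)

/-- ℓ¹ norm on `ι → ℝ`. -/
def l1norm {ι : Type*} [Fintype ι] (x : ι → ℝ) : ℝ := ∑ i, |x i|

/-- ℓ_{1,2} norm of a matrix, given as a function on pairs (row, column). -/
def l12norm {n M : ℕ} (X : Fin n × Fin M → ℝ) : ℝ :=
  ∑ l : Fin n, Real.sqrt (∑ j : Fin M, (X (l, j)) ^ 2)

/-- The sub-Gaussian norm `‖X‖_{ψ₂} = sup_{p ≥ 1} p^{-1/2} (E|X|^p)^{1/p}`. -/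
def sgNorm {Ω : Type*} [MeasurableSpace Ω] (P : Measure Ω) (X : Ω → ℝ) : ℝ :=
  ⨆ p : {p : ℝ // 1 ≤ p}, p.1 ^ (-(2:ℝ)⁻¹) * (∫ ω, |X ω| ^ p.1 ∂P) ^ p.1⁻¹

/-- `X` is sub-Gaussian: the family defining the ψ₂-norm is bounded above. -/
def IsSubG {Ω : Type*} [MeasurableSpace Ω] (P : Measure Ω) (X : Ω → ℝ) : Prop :=
  BddAbove (Set.range fun p : {p : ℝ // 1 ≤ p} =>
    p.1 ^ (-(2:ℝ)⁻¹) * (∫ ω, |X ω| ^ p.1 ∂P) ^ p.1⁻¹)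

/-- The sub-Gaussian norm of a random vector, `sup_{‖x‖₂ = 1} ‖⟨a, x⟩‖_{ψ₂}`. -/
def sgNormVec {Ω ι : Type*} [MeasurableSpace Ω] [Fintype ι] (P : Measure Ω)
    (a : Ω → ι → ℝ) : ℝ :=
  ⨆ x : {x : ι → ℝ // enorm2 x = 1}, sgNorm P fun ω => dotp (a ω) x.1

/-- A random vector is isotropic if `E[a aᵀ] = Id`. -/
def Isotropic {Ω ι : Type*} [MeasurableSpace Ω] [Fintype ι] [DecidableEq ι]
    (P : Measure Ω) (a : Ω → ι → ℝ) : Prop :=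
  ∀ k l, ∫ ω, a ω k * a ω l ∂P = if k = l then 1 else 0

/-- The standard Gaussian measure `N(0, Id)` on `ι → ℝ`. -/
def stdGaussian (ι : Type*) [Fintype ι] : Measure (ι → ℝ) :=
  Measure.pi fun _ => gaussianReal 0 1

/-- Gaussian mean width `w(L) = E[sup_{h ∈ L} ⟨g, h⟩]`. -/
def meanWidth {ι : Type*} [Fintype ι] (L : Set (ι → ℝ)) : ℝ :=
  ∫ g, sSup ((fun h => dotp g h) '' L) ∂(stdGaussian ι)

/-- The cone of `L` at `x`. -/
def coneAt {ι : Type*} [Fintype ι] (L : Set (ι → ℝ)) (x : ι → ℝ) : Set (ι → ℝ) :=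
  {v | ∃ c : ℝ, 0 ≤ c ∧ ∃ h ∈ L, v = c • (h - x)}

/-- The Euclidean sphere of radius `t`. -/
def sphR (ι : Type*) [Fintype ι] (t : ℝ) : Set (ι → ℝ) := {x | enorm2 x = t}

/-- Conic mean width `w₁(cone(L, x)) = w(cone(L,x) ∩ S^{d-1})`. -/
def conicWidth {ι : Type*} [Fintype ι] (L : Set (ι → ℝ)) (x : ι → ℝ) : ℝ :=
  meanWidth (coneAt L x ∩ sphR ι 1)

/-- Local mean width at scale `t`: `w_t(L) = w(L ∩ t S^{d-1})`. -/
def localWidth {ι : Type*} [Fintype ι] (L : Set (ι → ℝ)) (t : ℝ) : ℝ :=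
  meanWidth (L ∩ sphR ι t)

end

open MeasureTheory ProbabilityTheory Real
open scoped ENNReal NNReal

noncomputable section
namespace CWAux

def γ : Measure ℝ := gaussianReal 0 1
instance : IsProbabilityMeasure γ := by unfold γ; infer_instance

def pdf01 (x : ℝ) : ℝ := gaussianPDFReal 0 1 x

lemma pdf01_eq (x : ℝ) : pdf01 x = (Real.sqrt (2*π))⁻¹ * rexp (-x^2/2) := by
  simp [pdf01, gaussianPDFReal]

lemma pdf01_nonneg (x : ℝ) : 0 ≤ pdf01 x := gaussianPDFReal_nonneg 0 1 x

lemma pdf01_meas : Measurable pdf01 := measurable_gaussianPDFReal 0 1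

lemma γ_eq : γ = (volume : Measure ℝ).withDensity (fun x => ((pdf01 x).toNNReal : ℝ≥0∞)) := by
  rw [γ, gaussianReal_of_var_ne_zero 0 one_ne_zero]
  rfl

lemma integral_γ (f : ℝ → ℝ) : ∫ x, f x ∂γ = ∫ x, pdf01 x * f x := by
  rw [γ_eq, integral_withDensity_eq_integral_smul (pdf01_meas.real_toNNReal)]
  congr 1; funext x
  simp [NNReal.smul_def, Real.coe_toNNReal _ (pdf01_nonneg x)]

lemma integrable_γ_iff (f : ℝ → ℝ) :
    Integrable f γ ↔ Integrable (fun x => pdf01 x * f x) volume := by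
  rw [γ_eq, integrable_withDensity_iff_integrable_smul (pdf01_meas.real_toNNReal)]
  constructor <;> intro h <;> refine h.congr (Filter.Eventually.of_forall fun x => ?_) <;>
    simp [NNReal.smul_def, Real.coe_toNNReal _ (pdf01_nonneg x)]

lemma integrable_sq_exp {b : ℝ} (hb : 0 < b) :
    Integrable (fun x : ℝ => x^2 * rexp (-b * x^2)) := by
  have := integrable_rpow_mul_exp_neg_mul_sq hb (s := 2) (by norm_num)
  refine this.congr (Filter.Eventually.of_forall fun x => ?_)
  have : ((2:ℝ)) = ((2:ℕ):ℝ) := by norm_num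
  simp only [this, Real.rpow_natCast]

lemma integrable_id_exp {b : ℝ} (hb : 0 < b) :
    Integrable (fun x : ℝ => x * rexp (-b * x^2)) := by
  have := integrable_rpow_mul_exp_neg_mul_sq hb (s := 1) (by norm_num)
  refine this.congr (Filter.Eventually.of_forall fun x => ?_)
  simp only [Real.rpow_one]

lemma integral_sq_exp {b : ℝ} (hb : 0 < b) :
    ∫ x : ℝ, x^2 * rexp (-b * x^2) = (2*b)⁻¹ * Real.sqrt (π/b) := by
  have hu : ∀ x : ℝ, HasDerivAt (fun y : ℝ => y) 1 x := fun x => hasDerivAt_id x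
  have hv : ∀ x : ℝ, HasDerivAt (fun y : ℝ => -(2*b)⁻¹ * rexp (-b * y^2))
      (x * rexp (-b * x^2)) x := by
    intro x
    have h1 : HasDerivAt (fun y : ℝ => -b * y^2) (-b * (2*x)) x := by
      simpa using ((hasDerivAt_pow 2 x).const_mul (-b))
    have h2 := (h1.exp).const_mul (-(2*b)⁻¹)
    refine h2.congr_deriv ?_
    rw [show -(2*b)⁻¹ * (rexp (-b*x^2) * (-b*(2*x))) = ((2*b)⁻¹ * (2*b)) * (x * rexp (-b*x^2)) by ring,
      inv_mul_cancel₀ (by positivity), one_mul]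
  have key := integral_mul_deriv_eq_deriv_mul_of_integrable (fun x _ => hu x) (fun x _ => hv x)
    ((integrable_sq_exp hb).congr (Filter.Eventually.of_forall fun x => by
      simp only [Pi.mul_apply]; ring))
    (((integrable_exp_neg_mul_sq hb).const_mul (-(2*b)⁻¹)).congr
      (Filter.Eventually.of_forall fun x => by simp only [Pi.mul_apply]; ring))
    (((integrable_id_exp hb).const_mul (-(2*b)⁻¹)).congr
      (Filter.Eventually.of_forall fun x => by simp only [Pi.mul_apply]; ring))
  have e1 : ∫ x : ℝ, x * (x * rexp (-b * x^2)) = ∫ x : ℝ, x^2 * rexp (-b * x^2) := by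
    congr 1; funext x; ring
  rw [e1] at key
  rw [key]
  have e2 : ∫ x : ℝ, (1:ℝ) * (-(2*b)⁻¹ * rexp (-b * x^2)) =
      (-(2*b)⁻¹) • ∫ x : ℝ, rexp (-b * x^2) := by
    rw [← integral_smul]; congr 1; funext x; simp only [smul_eq_mul]; ring
  rw [e2, integral_gaussian]
  simp only [smul_eq_mul]
  ring


lemma sqrt2pi_pos : 0 < Real.sqrt (2*π) :=
  Real.sqrt_pos.mpr (by positivity)

lemma exp_half (x : ℝ) : rexp (-x^2/2) = rexp (-(2⁻¹) * x^2) := by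
  congr 1; ring

lemma integrable_id_γ : Integrable (fun x : ℝ => x) γ := by
  rw [integrable_γ_iff]
  have := (integrable_id_exp (b := 2⁻¹) (by norm_num)).const_mul ((Real.sqrt (2*π))⁻¹)
  refine this.congr (Filter.Eventually.of_forall fun x => ?_)
  simp only [pdf01_eq, exp_half]; ring

lemma integral_id_γ : ∫ x, x ∂γ = 0 := by
  rw [integral_γ]
  have h := integral_neg_eq_self (fun x : ℝ => pdf01 x * x) (volume : Measure ℝ)
  have h2 : ∀ x : ℝ, pdf01 (-x) * (-x) = -(pdf01 x * x) := by
    intro x; rw [pdf01_eq, pdf01_eq, neg_sq]; ring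
  simp only [h2] at h
  rw [integral_neg] at h
  linarith

lemma integrable_sq_γ : Integrable (fun x : ℝ => x^2) γ := by
  rw [integrable_γ_iff]
  have := (integrable_sq_exp (b := 2⁻¹) (by norm_num)).const_mul ((Real.sqrt (2*π))⁻¹)
  refine this.congr (Filter.Eventually.of_forall fun x => ?_)
  simp only [pdf01_eq, exp_half]; ring

lemma integral_sq_γ : ∫ x, x^2 ∂γ = 1 := by
  rw [integral_γ]
  have e : ∀ x : ℝ, pdf01 x * x^2 = (Real.sqrt (2*π))⁻¹ • (x^2 * rexp (-(2⁻¹) * x^2)) := by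
    intro x; rw [pdf01_eq, exp_half]; simp only [smul_eq_mul]; ring
  simp only [e]
  rw [integral_smul, integral_sq_exp (by norm_num : (0:ℝ) < 2⁻¹)]
  have : π / 2⁻¹ = 2 * π := by ring
  rw [this]
  simp only [smul_eq_mul]
  rw [show (2 * 2⁻¹ : ℝ)⁻¹ = 1 by norm_num]
  rw [one_mul, inv_mul_cancel₀ (ne_of_gt sqrt2pi_pos)]

lemma exp_comb (x : ℝ) : rexp (-x^2/2) * rexp (x^2/4) = rexp (-(4⁻¹) * x^2) := by
  rw [← Real.exp_add]; congr 1; ring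

lemma sqrt_4pi : Real.sqrt (π / 4⁻¹) = Real.sqrt 2 * Real.sqrt (2*π) := by
  rw [← Real.sqrt_mul (by norm_num : (0:ℝ) ≤ 2)]
  congr 1; ring

lemma integrable_exp4_γ : Integrable (fun x : ℝ => rexp (x^2/4)) γ := by
  rw [integrable_γ_iff]
  have := (integrable_exp_neg_mul_sq (b := 4⁻¹) (by norm_num)).const_mul ((Real.sqrt (2*π))⁻¹)
  refine this.congr (Filter.Eventually.of_forall fun x => ?_)
  simp only [pdf01_eq]; rw [mul_assoc, exp_comb]

lemma integral_exp4_γ : ∫ x, rexp (x^2/4) ∂γ = Real.sqrt 2 := by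
  rw [integral_γ]
  have e : ∀ x : ℝ, pdf01 x * rexp (x^2/4) = (Real.sqrt (2*π))⁻¹ • rexp (-(4⁻¹) * x^2) := by
    intro x; rw [pdf01_eq, mul_assoc, exp_comb]; simp only [smul_eq_mul]
  simp only [e]
  rw [integral_smul, integral_gaussian, sqrt_4pi]
  simp only [smul_eq_mul]
  rw [← mul_assoc, ← mul_comm (Real.sqrt 2) _, mul_assoc]
  rw [inv_mul_cancel₀ (ne_of_gt sqrt2pi_pos), mul_one]

lemma integrable_sq_exp4_γ : Integrable (fun x : ℝ => x^2 * rexp (x^2/4)) γ := by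
  rw [integrable_γ_iff]
  have := (integrable_sq_exp (b := 4⁻¹) (by norm_num)).const_mul ((Real.sqrt (2*π))⁻¹)
  refine this.congr (Filter.Eventually.of_forall fun x => ?_)
  simp only [pdf01_eq]
  have : x^2 * rexp (-(4⁻¹) * x^2) = x^2 * (rexp (-x^2/2) * rexp (x^2/4)) := by
    rw [exp_comb]
  rw [this]; ring

lemma integral_sq_exp4_γ : ∫ x, x^2 * rexp (x^2/4) ∂γ = 2 * Real.sqrt 2 := by
  rw [integral_γ]
  have e : ∀ x : ℝ, pdf01 x * (x^2 * rexp (x^2/4)) =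
      (Real.sqrt (2*π))⁻¹ • (x^2 * rexp (-(4⁻¹) * x^2)) := by
    intro x
    rw [pdf01_eq]
    have : x^2 * rexp (-(4⁻¹) * x^2) = x^2 * (rexp (-x^2/2) * rexp (x^2/4)) := by
      rw [exp_comb]
    rw [this]; simp only [smul_eq_mul]; ring
  simp only [e]
  rw [integral_smul, integral_sq_exp (by norm_num : (0:ℝ) < 4⁻¹), sqrt_4pi]
  simp only [smul_eq_mul]
  rw [show (2 * 4⁻¹ : ℝ)⁻¹ = 2 by norm_num]
  field_simp



def RG : Type := ℝ
instance : MeasurableSpace RG := inferInstanceAs (MeasurableSpace ℝ)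
instance : MeasureSpace RG := { volume := γ }
instance : IsProbabilityMeasure (volume : Measure RG) := inferInstanceAs (IsProbabilityMeasure γ)
instance : SigmaFinite (volume : Measure RG) := inferInstance

def stdG (ι : Type*) [Fintype ι] : Measure (ι → ℝ) := Measure.pi fun _ => gaussianReal 0 1

lemma integral_std {ι : Type*} [Fintype ι] (F : (ι → ℝ) → ℝ) :
    ∫ g, F g ∂(stdG ι) = ∫ x : ι → RG, F x := rfl

lemma integrable_std {ι : Type*} [Fintype ι] (F : (ι → ℝ) → ℝ) :
    Integrable F (stdG ι) ↔ Integrable (fun x : ι → RG => F x) := Iff.rfl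

instance (ι : Type*) [Fintype ι] : IsProbabilityMeasure (stdG ι) := by
  unfold stdG; infer_instance

lemma integral_pi_prod {ι : Type*} [Fintype ι] (f : ι → ℝ → ℝ) :
    ∫ g, ∏ i, f i (g i) ∂(stdG ι) = ∏ i, ∫ x, f i x ∂γ := by
  rw [integral_std]
  exact MeasureTheory.integral_fintype_prod_eq_prod (f := fun i (x : RG) => f i x)

lemma integrable_pi_prod {ι : Type*} [Fintype ι] (f : ι → ℝ → ℝ)
    (hf : ∀ i, Integrable (f i) γ) :
    Integrable (fun g : ι → ℝ => ∏ i, f i (g i)) (stdG ι) := by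
  rw [integrable_std]
  exact MeasureTheory.Integrable.fintype_prod_dep (E := fun _ => RG)
    (f := fun i (x : RG) => f i x) hf


variable {ι : Type*} [Fintype ι] [DecidableEq ι]

lemma single_repr (p : ι) (f : ℝ → ℝ) :
    (fun g : ι → ℝ => f (g p)) = fun g => ∏ q, (fun x : ℝ => if q = p then f x else 1) (g q) := by
  funext g
  rw [show (∏ q, (fun x : ℝ => if q = p then f x else 1) (g q))
      = ∏ q, (if q = p then f (g q) else 1) from rfl,
    Finset.prod_ite_eq' Finset.univ p (fun q => f (g q))]
  simp

lemma integral_single (p : ι) (f : ℝ → ℝ) :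
    ∫ g : ι → ℝ, f (g p) ∂(stdG ι) = ∫ x, f x ∂γ := by
  rw [single_repr p f, integral_pi_prod (fun q (x:ℝ) => if q = p then f x else 1)]
  have h2 : ∀ q : ι, (∫ x, (if q = p then f x else 1) ∂γ) = if q = p then ∫ x, f x ∂γ else 1 := by
    intro q; by_cases h : q = p <;> simp [h]
  rw [Finset.prod_congr rfl (fun q _ => h2 q), Finset.prod_ite_eq' Finset.univ p]
  simp

lemma integrable_single (p : ι) (f : ℝ → ℝ) (hf : Integrable f γ) :
    Integrable (fun g : ι → ℝ => f (g p)) (stdG ι) := by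
  rw [single_repr p f]
  refine integrable_pi_prod (fun q (x:ℝ) => if q = p then f x else 1) (fun q => ?_)
  by_cases h : q = p <;> simp [h, hf]

section Rows
variable {n M : ℕ}

def Srow (l : Fin n) (g : Fin n × Fin M → ℝ) : ℝ := ∑ j, (g (l, j))^2

lemma Srow_nonneg (l : Fin n) (g : Fin n × Fin M → ℝ) : 0 ≤ Srow l g :=
  Finset.sum_nonneg fun j _ => sq_nonneg _

lemma Srow_meas (l : Fin n) : Measurable (Srow (M := M) l) :=
  Finset.measurable_sum _ fun j _ => (measurable_pi_apply (l, j)).pow_const 2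

lemma integral_Srow (l : Fin n) : ∫ g, Srow l g ∂(stdG (Fin n × Fin M)) = M := by
  unfold Srow
  rw [integral_finset_sum _ (fun j _ => integrable_single (l, j) (fun x => x^2) integrable_sq_γ)]
  have h : ∀ j : Fin M, (∫ a : Fin n × Fin M → ℝ, (a (l, j))^2 ∂(stdG (Fin n × Fin M))) = 1 :=
    fun j => (integral_single ((l, j)) (fun x => x^2)).trans integral_sq_γ
  simp [h]

lemma integrable_Srow (l : Fin n) : Integrable (Srow l) (stdG (Fin n × Fin M)) :=
  integrable_finset_sum _ (fun j _ => integrable_single (l, j) (fun x => x^2) integrable_sq_γ)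

def fij (l : Fin n) (j : Fin M) (p : Fin n × Fin M) (x : ℝ) : ℝ :=
  (if p = (l, j) then x^2 else 1) * (if p.1 = l then rexp (x^2/4) else 1)

lemma row_exp_repr (l : Fin n) (g : Fin n × Fin M → ℝ) :
    rexp (Srow l g / 4) = ∏ p : Fin n × Fin M, (if p.1 = l then rexp ((g p)^2/4) else 1) := by
  rw [Fintype.prod_prod_type]
  have h1 : ∀ l' : Fin n, (∏ j' : Fin M, (if (l', j').1 = l then rexp ((g (l', j'))^2/4) else 1))
      = if l' = l then ∏ j' : Fin M, rexp ((g (l', j'))^2/4) else 1 := by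
    intro l'; by_cases h : l' = l <;> simp [h]
  rw [Finset.prod_congr rfl (fun l' _ => h1 l'), Finset.prod_ite_eq' Finset.univ l]
  simp only [Finset.mem_univ, if_true]
  rw [← Real.exp_sum]
  congr 1
  rw [Srow, Finset.sum_div]

lemma fij_repr (l : Fin n) (j : Fin M) (g : Fin n × Fin M → ℝ) :
    (g (l, j))^2 * rexp (Srow l g / 4) = ∏ p : Fin n × Fin M, fij l j p (g p) := by
  unfold fij
  rw [Finset.prod_mul_distrib]
  rw [Finset.prod_ite_eq' Finset.univ (l, j) (fun p => (g p)^2)]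
  rw [← row_exp_repr]
  simp

lemma integral_fij (l : Fin n) (j : Fin M) (p : Fin n × Fin M) :
    ∫ x, fij l j p x ∂γ = (if p = (l, j) then 2 else 1) * (if p.1 = l then Real.sqrt 2 else 1) := by
  unfold fij
  by_cases h1 : p = (l, j)
  · have h2 : p.1 = l := by rw [h1]
    simp only [h1, h2, if_true]
    simpa [mul_comm] using integral_sq_exp4_γ
  · by_cases h2 : p.1 = l
    · simp only [h1, h2, if_true, if_false]
      simpa using integral_exp4_γ
    · simp only [h1, h2, if_false]
      simp

lemma integrable_fij (l : Fin n) (j : Fin M) (p : Fin n × Fin M) :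
    Integrable (fij l j p) γ := by
  unfold fij
  by_cases h1 : p = (l, j)
  · have h2 : p.1 = l := by rw [h1]
    simp only [h1, h2, if_true]
    simpa using integrable_sq_exp4_γ
  · by_cases h2 : p.1 = l
    · simp only [h1, h2, if_true, if_false]
      simpa using integrable_exp4_γ
    · simp only [h1, h2, if_false]
      simpa using integrable_const (1 : ℝ)

lemma card_row (l : Fin n) :
    (Finset.univ.filter (fun p : Fin n × Fin M => p.1 = l)).card = M := by
  have : Finset.univ.filter (fun p : Fin n × Fin M => p.1 = l) = {l} ×ˢ Finset.univ := by
    ext p; simp [Finset.mem_product, Prod.ext_iff, eq_comm]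
  rw [this, Finset.card_product]
  simp

lemma prod_integral_fij (l : Fin n) (j : Fin M) :
    ∏ p : Fin n × Fin M, ∫ x, fij l j p x ∂γ = 2 * (Real.sqrt 2)^M := by
  simp only [integral_fij]
  rw [Finset.prod_mul_distrib]
  rw [Finset.prod_ite_eq' Finset.univ (l, j) (fun _ => (2:ℝ))]
  have h2 : ∏ p : Fin n × Fin M, (if p.1 = l then Real.sqrt 2 else 1) = (Real.sqrt 2)^M := by
    rw [Finset.prod_ite, Finset.prod_const, Finset.prod_const, one_pow, mul_one, card_row l]
  rw [h2]
  simp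

lemma integral_row_term (l : Fin n) (j : Fin M) :
    ∫ g, (g (l, j))^2 * rexp (Srow l g / 4) ∂(stdG (Fin n × Fin M)) = 2 * (Real.sqrt 2)^M := by
  simp only [fij_repr]
  rw [integral_pi_prod (fij l j)]
  exact prod_integral_fij l j

lemma integrable_row_term (l : Fin n) (j : Fin M) :
    Integrable (fun g : Fin n × Fin M → ℝ => (g (l, j))^2 * rexp (Srow l g / 4))
      (stdG (Fin n × Fin M)) := by
  simp only [fij_repr]
  exact integrable_pi_prod (fij l j) (integrable_fij l j)

lemma integral_Srow_exp (l : Fin n) :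
    ∫ g, Srow l g * rexp (Srow l g / 4) ∂(stdG (Fin n × Fin M))
      = M * (2 * (Real.sqrt 2)^M) := by
  have e : ∀ g : Fin n × Fin M → ℝ, Srow l g * rexp (Srow l g / 4)
      = ∑ j : Fin M, (g (l, j))^2 * rexp (Srow l g / 4) := by
    intro g; rw [Srow, Finset.sum_mul]
  simp only [e]
  rw [integral_finset_sum _ (fun j _ => integrable_row_term l j)]
  simp only [integral_row_term l]
  simp [mul_comm]

lemma integrable_Srow_exp (l : Fin n) :
    Integrable (fun g => Srow l g * rexp (Srow l g / 4)) (stdG (Fin n × Fin M)) := by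
  have e : (fun g : Fin n × Fin M → ℝ => Srow l g * rexp (Srow l g / 4))
      = fun g => ∑ j : Fin M, (g (l, j))^2 * rexp (Srow l g / 4) := by
    funext g; rw [Srow, Finset.sum_mul]
  rw [e]
  exact integrable_finset_sum _ (fun j _ => integrable_row_term l j)

end Rows


lemma cs_sum {κ : Type*} [Fintype κ] (a b : κ → ℝ) :
    ∑ j, a j * b j ≤ Real.sqrt (∑ j, (a j)^2) * Real.sqrt (∑ j, (b j)^2) := by
  have h2 : (∑ j, a j * b j)^2 ≤ (∑ j, (a j)^2) * (∑ j, (b j)^2) :=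
    Finset.sum_mul_sq_le_sq_mul_sq Finset.univ a b
  calc ∑ j, a j * b j ≤ |∑ j, a j * b j| := le_abs_self _
    _ = Real.sqrt ((∑ j, a j * b j)^2) := (Real.sqrt_sq_eq_abs _).symm
    _ ≤ Real.sqrt ((∑ j, (a j)^2) * (∑ j, (b j)^2)) := Real.sqrt_le_sqrt h2
    _ = _ := Real.sqrt_mul (Finset.sum_nonneg fun j _ => sq_nonneg _) _

lemma sqrt_le_one_add {t : ℝ} (ht : 0 ≤ t) : Real.sqrt t ≤ 1 + t := by
  nlinarith [Real.sq_sqrt ht, Real.sqrt_nonneg t]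

lemma sq_integral_le {α : Type*} [MeasurableSpace α] {P : Measure α} [IsProbabilityMeasure P]
    {h : α → ℝ} (h1 : Integrable h P) (h2 : Integrable (fun a => h a ^ 2) P) :
    (∫ a, h a ∂P)^2 ≤ ∫ a, h a ^ 2 ∂P := by
  set c := ∫ a, h a ∂P with hc
  have e : ∀ a, (h a - c)^2 = h a ^ 2 - 2*c * h a + c^2 := fun a => by ring
  have h0 : 0 ≤ ∫ a, (h a - c)^2 ∂P := integral_nonneg fun a => sq_nonneg _
  have hint2 : Integrable (fun a => h a ^ 2 - 2*c * h a) P := h2.sub (h1.const_mul (2*c))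
  have hval : ∫ a, (h a - c)^2 ∂P = (∫ a, h a ^ 2 ∂P) - 2*c*c + c^2 := by
    simp only [e]
    rw [integral_add hint2 (integrable_const _),
      integral_sub h2 (h1.const_mul (2*c)), integral_const]
    simp only [probReal_univ, smul_eq_mul, one_mul]
    rw [integral_const_mul]
  rw [hval] at h0
  nlinarith

end CWAux
end


set_option maxHeartbeats 2000000 in
/-- conic mean width of the ℓ_{1,2}-descent cone at a sparse rank-one matrix. -/
theorem conic_width_l12_ball :
    ∃ C : ℝ, 0 < C ∧
    ∀ (n M s : ℕ), 1 ≤ s → s ≤ n →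
    ∀ x0 : Fin n → ℝ, x0 ≠ 0 → {l : Fin n | x0 l ≠ 0}.ncard ≤ s →
    ∀ μ : Fin M → ℝ, μ ≠ 0 →
    (conicWidth
        {X : Fin n × Fin M → ℝ |
          l12norm X ≤ l12norm (fun p : Fin n × Fin M => x0 p.1 * μ p.2)}
        (fun p : Fin n × Fin M => x0 p.1 * μ p.2)) ^ 2
      ≤ C * s * max (M : ℝ) (Real.log (2 * n / s)) := by
  classical
  refine ⟨100, by norm_num, ?_⟩
  intro n M s hs1 hsn x0 hx0 hsupp μ hμ
  have hM : 1 ≤ M := by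
    rcases Nat.eq_zero_or_pos M with h | h
    · subst h; exact absurd (funext fun j => j.elim0) hμ
    · exact h
  have hsR : (1:ℝ) ≤ (s:ℝ) := by exact_mod_cast hs1
  have hMR : (1:ℝ) ≤ (M:ℝ) := by exact_mod_cast hM
  have hnsR : (s:ℝ) ≤ (n:ℝ) := by exact_mod_cast hsn
  have hs0 : (0:ℝ) < s := lt_of_lt_of_le one_pos hsR
  have hn0 : (0:ℝ) < n := lt_of_lt_of_le (lt_of_lt_of_le one_pos hsR) hnsR
  set x : Fin n × Fin M → ℝ := fun p => x0 p.1 * μ p.2 with hxdef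
  -- basic positivity facts
  have hμ2 : 0 < ∑ j, (μ j)^2 := by
    obtain ⟨j, hj⟩ : ∃ j, μ j ≠ 0 := by
      by_contra hcon; push_neg at hcon; exact hμ (funext hcon)
    exact Finset.sum_pos' (fun _ _ => sq_nonneg _) ⟨j, Finset.mem_univ j, by positivity⟩
  set nμ : ℝ := enorm2 μ with hnμdef
  have hnμ : 0 < nμ := Real.sqrt_pos.mpr hμ2
  have hnμsq : nμ^2 = ∑ j, (μ j)^2 := Real.sq_sqrt hμ2.le
  set B : ℝ := 2 * M * (Real.sqrt 2)^M with hBdef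
  have hsqrt2 : 1 ≤ Real.sqrt 2 := by
    rw [show (1:ℝ) = Real.sqrt 1 by simp]
    exact Real.sqrt_le_sqrt one_le_two
  have hpow1 : (1:ℝ) ≤ (Real.sqrt 2)^M := one_le_pow₀ hsqrt2
  have hB1 : 2 ≤ B := by
    calc (2:ℝ) = 2 * 1 * 1 := by ring
    _ ≤ 2 * M * (Real.sqrt 2)^M := by
        apply mul_le_mul _ hpow1 (by norm_num) (by positivity)
        nlinarith
  have hB0 : 0 < B := lt_of_lt_of_le two_pos hB1
  have harg1 : (1:ℝ) ≤ n * B / s := by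
    rw [le_div_iff₀ hs0]
    nlinarith
  have hlog0 : 0 ≤ Real.log (n * B / s) := Real.log_nonneg harg1
  set lam : ℝ := Real.sqrt (4 * Real.log (n * B / s)) with hlamdef
  have hlam0 : 0 ≤ lam := Real.sqrt_nonneg _
  have hlamsq : lam^2 = 4 * Real.log (n * B / s) := Real.sq_sqrt (by linarith)
  have hexplam : rexp (-(lam^2)/4) = s / (n * B) := by
    rw [hlamsq, show -(4 * Real.log (n * B / s))/4 = -Real.log (n * B / s) by ring,
      Real.exp_neg, Real.exp_log (by positivity : (0:ℝ) < n * B / s), inv_div]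
  set T : Finset (Fin n) := Finset.univ.filter (fun l => x0 l ≠ 0) with hTdef
  have hTcard : (T.card : ℝ) ≤ s := by
    have h1 : {l : Fin n | x0 l ≠ 0}.ncard = T.card := by
      rw [Set.ncard_eq_toFinset_card']
      congr 1
      ext l; simp [hTdef]
    have : T.card ≤ s := h1 ▸ hsupp
    exact_mod_cast this
  have hTccard : ((Tᶜ : Finset (Fin n)).card : ℝ) ≤ n := by
    have : (Tᶜ : Finset (Fin n)).card ≤ n := le_trans (Finset.card_le_card (Finset.subset_univ _)) (by simp)
    exact_mod_cast this
  -- the dual vector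
  set v : (Fin n × Fin M → ℝ) → (Fin n × Fin M) → ℝ := fun g p =>
    if x0 p.1 ≠ 0 then lam * (x0 p.1 / |x0 p.1| * μ p.2 / nμ)
    else (if Real.sqrt (CWAux.Srow p.1 g) ≤ lam then 1
          else lam / Real.sqrt (CWAux.Srow p.1 g)) * g p with hvdef
  set G : (Fin n × Fin M → ℝ) → ℝ := fun g =>
    (∑ l ∈ T, (2 * CWAux.Srow l g + 2 * lam^2))
      + rexp (-(lam^2)/4) * ∑ l ∈ Tᶜ, CWAux.Srow l g * rexp (CWAux.Srow l g / 4) with hGdef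
  have hG0 : ∀ g, 0 ≤ G g := by
    intro g
    apply add_nonneg
    · apply Finset.sum_nonneg
      intro l _
      have := CWAux.Srow_nonneg l g
      positivity
    · apply mul_nonneg (Real.exp_pos _).le
      apply Finset.sum_nonneg
      intro l _
      have := CWAux.Srow_nonneg l g
      positivity
  -- row facts about v
  have hrowvT : ∀ (l : Fin n), x0 l ≠ 0 → ∀ g, ∑ j, (v g (l,j))^2 = lam^2 := by
    intro l hl g
    have hx2 : (x0 l / |x0 l|)^2 = 1 := by
      rw [div_pow, sq_abs]
      exact div_self (pow_ne_zero 2 hl)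
    have hterm : ∀ j : Fin M, (v g (l,j))^2 = lam^2/nμ^2 * (μ j)^2 := by
      intro j
      simp only [hvdef, if_pos hl]
      rw [show (lam * (x0 l / |x0 l| * μ j / nμ))^2
          = lam^2/nμ^2 * (μ j)^2 * (x0 l / |x0 l|)^2 by ring, hx2, mul_one]
    rw [Finset.sum_congr rfl (fun j _ => hterm j), ← Finset.mul_sum, ← hnμsq]
    field_simp
  have hrowv_le : ∀ g (l : Fin n), ∑ j, (v g (l,j))^2 ≤ lam^2 := by
    intro g l
    by_cases hl : x0 l ≠ 0
    · exact le_of_eq (hrowvT l hl g)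
    · push_neg at hl
      have hveq : ∀ j : Fin M, v g (l,j) = (if Real.sqrt (CWAux.Srow l g) ≤ lam then 1
          else lam / Real.sqrt (CWAux.Srow l g)) * g (l,j) := by
        intro j; simp [hvdef, hl]
      have hsum : ∑ j, (v g (l,j))^2 = (if Real.sqrt (CWAux.Srow l g) ≤ lam then 1
          else lam / Real.sqrt (CWAux.Srow l g))^2 * CWAux.Srow l g := by
        rw [Finset.sum_congr rfl (fun j _ => by rw [hveq j]), CWAux.Srow, Finset.mul_sum]
        exact Finset.sum_congr rfl (fun j _ => by ring)
      rw [hsum]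
      have hS0 : 0 ≤ CWAux.Srow l g := CWAux.Srow_nonneg l g
      by_cases hcase : Real.sqrt (CWAux.Srow l g) ≤ lam
      · rw [if_pos hcase, one_pow, one_mul]
        calc CWAux.Srow l g = (Real.sqrt (CWAux.Srow l g))^2 := (Real.sq_sqrt hS0).symm
        _ ≤ lam^2 := pow_le_pow_left₀ (Real.sqrt_nonneg _) hcase 2
      · rw [if_neg hcase]
        push_neg at hcase
        have hq0 : 0 < Real.sqrt (CWAux.Srow l g) := lt_of_le_of_lt hlam0 hcase
        have hSpos : 0 < CWAux.Srow l g := Real.sqrt_pos.mp hq0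
        rw [div_pow]
        rw [Real.sq_sqrt hS0]
        rw [div_mul_eq_mul_div, mul_div_assoc, div_self (ne_of_gt hSpos), mul_one]
  -- l12norm of x
  have hl12x : l12norm x = (∑ l, |x0 l|) * nμ := by
    rw [l12norm]
    have hterm : ∀ l : Fin n, Real.sqrt (∑ j, (x (l,j))^2) = |x0 l| * nμ := by
      intro l
      have : (∑ j, (x (l,j))^2) = (x0 l)^2 * ∑ j, (μ j)^2 := by
        rw [Finset.mul_sum]
        exact Finset.sum_congr rfl (fun j _ => by simp only [hxdef]; ring)
      rw [this, Real.sqrt_mul (sq_nonneg _), Real.sqrt_sq_eq_abs, ← hnμsq,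
        Real.sqrt_sq hnμ.le]
    rw [Finset.sum_congr rfl (fun l _ => hterm l), ← Finset.sum_mul]
  -- dotp (v g) x
  have hvxg : ∀ g, dotp (v g) x = lam * l12norm x := by
    intro g
    rw [dotp, Fintype.sum_prod_type]
    have hterm : ∀ l : Fin n, (∑ j, v g (l,j) * x (l,j)) = lam * (|x0 l| * nμ) := by
      intro l
      by_cases hl : x0 l ≠ 0
      · have habs : x0 l / |x0 l| * x0 l = |x0 l| := by
          rw [div_mul_eq_mul_div]
          rw [show x0 l * x0 l = |x0 l| * |x0 l| by rw [← abs_mul, abs_mul_self]]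
          rw [mul_div_assoc, div_self (abs_ne_zero.mpr hl), mul_one]
        have h1 : ∀ j : Fin M, v g (l,j) * x (l,j) = lam * |x0 l| / nμ * (μ j)^2 := by
          intro j
          simp only [hvdef, if_pos hl, hxdef]
          rw [show lam * (x0 l / |x0 l| * μ j / nμ) * (x0 l * μ j)
              = lam * (x0 l / |x0 l| * x0 l) / nμ * (μ j)^2 by ring, habs]
        rw [Finset.sum_congr rfl (fun j _ => h1 j), ← Finset.mul_sum, ← hnμsq]
        field_simp
      · push_neg at hl
        have : ∀ j : Fin M, v g (l,j) * x (l,j) = 0 := by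
          intro j; simp [hxdef, hl]
        rw [Finset.sum_congr rfl (fun j _ => this j)]
        simp [hl]
    rw [Finset.sum_congr rfl (fun l _ => hterm l), hl12x, ← Finset.mul_sum, Finset.sum_mul]
  -- dotp (v g) Y for arbitrary Y
  have hvY : ∀ g Y, dotp (v g) Y ≤ lam * l12norm Y := by
    intro g Y
    rw [dotp, Fintype.sum_prod_type, l12norm, Finset.mul_sum]
    apply Finset.sum_le_sum
    intro l _
    calc ∑ j, v g (l,j) * Y (l,j)
        ≤ Real.sqrt (∑ j, (v g (l,j))^2) * Real.sqrt (∑ j, (Y (l,j))^2) :=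
          CWAux.cs_sum _ _
    _ ≤ lam * Real.sqrt (∑ j, (Y (l,j))^2) := by
        apply mul_le_mul_of_nonneg_right _ (Real.sqrt_nonneg _)
        calc Real.sqrt (∑ j, (v g (l,j))^2) ≤ Real.sqrt (lam^2) :=
              Real.sqrt_le_sqrt (hrowv_le g l)
        _ = lam := by rw [Real.sqrt_sq hlam0]
  -- pointwise bound on the residual
  have hF_le : ∀ g, ∑ p : Fin n × Fin M, (g p - v g p)^2 ≤ G g := by
    intro g
    rw [Fintype.sum_prod_type]
    have hsplit := Finset.sum_filter_add_sum_filter_not Finset.univ (fun l => x0 l ≠ 0)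
      (fun l => ∑ j, (g (l,j) - v g (l,j))^2)
    rw [← hsplit]
    have hTc : Finset.univ.filter (fun l => ¬ x0 l ≠ 0) = Tᶜ := by
      ext l; simp [hTdef]
    rw [hTc]
    simp only [hGdef]
    apply add_le_add
    · apply Finset.sum_le_sum
      intro l hl
      have hl' : x0 l ≠ 0 := (Finset.mem_filter.mp hl).2
      calc ∑ j, (g (l,j) - v g (l,j))^2
          ≤ ∑ j, (2 * (g (l,j))^2 + 2 * (v g (l,j))^2) := by
            apply Finset.sum_le_sum
            intro j _
            nlinarith [sq_nonneg (g (l,j) + v g (l,j))]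
      _ = 2 * CWAux.Srow l g + 2 * lam^2 := by
          rw [Finset.sum_add_distrib, ← Finset.mul_sum, ← Finset.mul_sum,
            hrowvT l hl' g, CWAux.Srow]
    · rw [Finset.mul_sum]
      apply Finset.sum_le_sum
      intro l hl
      have hl' : x0 l = 0 := by
        have := Finset.mem_compl.mp hl
        simpa [hTdef] using this
      have hveq : ∀ j : Fin M, v g (l,j) = (if Real.sqrt (CWAux.Srow l g) ≤ lam then 1
          else lam / Real.sqrt (CWAux.Srow l g)) * g (l,j) := by
        intro j; simp [hvdef, hl']
      have hS0 : 0 ≤ CWAux.Srow l g := CWAux.Srow_nonneg l g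
      have hsum : ∑ j, (g (l,j) - v g (l,j))^2
          = (1 - (if Real.sqrt (CWAux.Srow l g) ≤ lam then 1
              else lam / Real.sqrt (CWAux.Srow l g)))^2 * CWAux.Srow l g := by
        rw [Finset.sum_congr rfl (fun j _ => by rw [hveq j]), CWAux.Srow, Finset.mul_sum]
        exact Finset.sum_congr rfl (fun j _ => by ring)
      rw [hsum]
      by_cases hcase : Real.sqrt (CWAux.Srow l g) ≤ lam
      · rw [if_pos hcase]
        simp only [sub_self]
        have : (0:ℝ)^2 * CWAux.Srow l g = 0 := by ring
        rw [this]
        positivity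
      · rw [if_neg hcase]
        push_neg at hcase
        have hq0 : 0 < Real.sqrt (CWAux.Srow l g) := lt_of_le_of_lt hlam0 hcase
        have hSpos : 0 < CWAux.Srow l g := Real.sqrt_pos.mp hq0
        have hc0 : 0 ≤ lam / Real.sqrt (CWAux.Srow l g) := by positivity
        have hc1 : lam / Real.sqrt (CWAux.Srow l g) ≤ 1 := by
          rw [div_le_one hq0]; exact hcase.le
        have h1 : (1 - lam / Real.sqrt (CWAux.Srow l g))^2 * CWAux.Srow l g
            ≤ CWAux.Srow l g := by
          nlinarith [mul_nonneg (mul_nonneg hc0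
            (by linarith : (0:ℝ) ≤ 2 - lam / Real.sqrt (CWAux.Srow l g))) hS0]
        have hlamS : lam^2 ≤ CWAux.Srow l g := by
          calc lam^2 ≤ (Real.sqrt (CWAux.Srow l g))^2 :=
                pow_le_pow_left₀ hlam0 hcase.le 2
          _ = CWAux.Srow l g := Real.sq_sqrt hS0
        have h2 : CWAux.Srow l g
            ≤ rexp (-(lam^2)/4) * (CWAux.Srow l g * rexp (CWAux.Srow l g / 4)) := by
          have hcomb : rexp (-(lam^2)/4) * rexp (CWAux.Srow l g / 4)
              = rexp ((CWAux.Srow l g - lam^2)/4) := by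
            rw [← Real.exp_add]; congr 1; ring
          have hge1 : 1 ≤ rexp ((CWAux.Srow l g - lam^2)/4) :=
            Real.one_le_exp (by linarith)
          calc CWAux.Srow l g = 1 * CWAux.Srow l g := (one_mul _).symm
          _ ≤ rexp ((CWAux.Srow l g - lam^2)/4) * CWAux.Srow l g :=
              mul_le_mul_of_nonneg_right hge1 hS0
          _ = rexp (-(lam^2)/4) * (CWAux.Srow l g * rexp (CWAux.Srow l g / 4)) := by
              rw [← hcomb]; ring
        linarith
  -- expand the goal
  simp only [conicWidth, meanWidth]
  set D : Set (Fin n × Fin M → ℝ) :=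
    coneAt {X : Fin n × Fin M → ℝ | l12norm X ≤ l12norm x} x ∩ sphR (Fin n × Fin M) 1 with hDdef
  -- key pointwise bound on elements of D
  have hKey : ∀ g, ∀ y ∈ D, dotp g y ≤ Real.sqrt (G g) := by
    intro g y hy
    obtain ⟨hy1, hy2⟩ := hy
    obtain ⟨c, hc0, Y, hYK, hyeq⟩ := hy1
    have hdec : dotp g y = (∑ p, (g p - v g p) * y p) + dotp (v g) y := by
      rw [dotp, dotp, ← Finset.sum_add_distrib]
      exact Finset.sum_congr rfl (fun p _ => by ring)
    have hy2' : Real.sqrt (∑ p, (y p)^2) = 1 := hy2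
    have hCS : (∑ p, (g p - v g p) * y p) ≤ Real.sqrt (∑ p, (g p - v g p)^2) := by
      calc (∑ p, (g p - v g p) * y p)
          ≤ Real.sqrt (∑ p, (g p - v g p)^2) * Real.sqrt (∑ p, (y p)^2) :=
            CWAux.cs_sum _ _
      _ = Real.sqrt (∑ p, (g p - v g p)^2) := by rw [hy2', mul_one]
    have hneg : dotp (v g) y ≤ 0 := by
      have hexp : dotp (v g) y = c * (dotp (v g) Y - dotp (v g) x) := by
        rw [hyeq, dotp, dotp, dotp, ← Finset.sum_sub_distrib, Finset.mul_sum]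
        apply Finset.sum_congr rfl
        intro p _
        simp only [Pi.smul_apply, Pi.sub_apply, smul_eq_mul]
        ring
      rw [hexp]
      apply mul_nonpos_of_nonneg_of_nonpos hc0
      have h1 := hvY g Y
      have h2 : l12norm Y ≤ l12norm x := hYK
      have h3 := hvxg g
      have h4 : lam * l12norm Y ≤ lam * l12norm x := mul_le_mul_of_nonneg_left h2 hlam0
      linarith only [h1, h3, h4]
    calc dotp g y ≤ Real.sqrt (∑ p, (g p - v g p)^2) + 0 := by
          rw [hdec]; exact add_le_add hCS hneg
    _ = Real.sqrt (∑ p, (g p - v g p)^2) := add_zero _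
    _ ≤ Real.sqrt (G g) := Real.sqrt_le_sqrt (hF_le g)
  have hSup : ∀ g, sSup ((fun h => dotp g h) '' D) ≤ Real.sqrt (G g) := by
    intro g
    apply Real.sSup_le
    · rintro z ⟨y, hyD, rfl⟩
      exact hKey g y hyD
    · exact Real.sqrt_nonneg _
  -- the lower-bound element
  have hxne : ∃ p : Fin n × Fin M, x p ≠ 0 := by
    obtain ⟨l, hl⟩ : ∃ l, x0 l ≠ 0 := by
      by_contra hcon; push_neg at hcon; exact hx0 (funext hcon)
    obtain ⟨j, hj⟩ : ∃ j, μ j ≠ 0 := by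
      by_contra hcon; push_neg at hcon; exact hμ (funext hcon)
    exact ⟨(l, j), mul_ne_zero hl hj⟩
  have hxs : 0 < ∑ p : Fin n × Fin M, (x p)^2 := by
    obtain ⟨p, hp⟩ := hxne
    exact Finset.sum_pos' (fun _ _ => sq_nonneg _) ⟨p, Finset.mem_univ p, by positivity⟩
  set N : ℝ := enorm2 x with hNdef
  have hN : 0 < N := Real.sqrt_pos.mpr hxs
  have hNsq : N^2 = ∑ p : Fin n × Fin M, (x p)^2 := Real.sq_sqrt hxs.le
  set eVec : Fin n × Fin M → ℝ := fun p => N⁻¹ * (0 - x p) with heVecdef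
  have hl12x0 : 0 ≤ l12norm x := by
    rw [l12norm]; exact Finset.sum_nonneg (fun l _ => Real.sqrt_nonneg _)
  have heD : eVec ∈ D := by
    constructor
    · refine ⟨N⁻¹, inv_nonneg.mpr hN.le, 0, ?_, ?_⟩
      · show l12norm (0 : Fin n × Fin M → ℝ) ≤ l12norm x
        have : l12norm (0 : Fin n × Fin M → ℝ) = 0 := by
          rw [l12norm]; simp
        rw [this]; exact hl12x0
      · funext p
        simp [heVecdef]
    · show enorm2 eVec = 1
      rw [enorm2]
      have : ∀ p : Fin n × Fin M, (eVec p)^2 = N⁻¹^2 * (x p)^2 := by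
        intro p; simp only [heVecdef]; ring
      rw [Finset.sum_congr rfl (fun p _ => this p), ← Finset.mul_sum, ← hNsq]
      rw [show N⁻¹^2 * N^2 = 1 by field_simp]
      exact Real.sqrt_one
  -- integration
  have hstd : stdGaussian (Fin n × Fin M) = CWAux.stdG (Fin n × Fin M) := rfl
  rw [hstd]
  set P : Measure (Fin n × Fin M → ℝ) := CWAux.stdG (Fin n × Fin M) with hPdef
  have hGint : Integrable G P := by
    apply Integrable.add
    · apply integrable_finset_sum
      intro l _
      exact ((CWAux.integrable_Srow l).const_mul 2).add (integrable_const _)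
    · exact (integrable_finset_sum _ (fun l _ => CWAux.integrable_Srow_exp l)).const_mul _
  have hGmeas : Measurable G := by
    apply Measurable.add
    · exact Finset.measurable_sum _
        (fun l _ => ((CWAux.Srow_meas l).const_mul 2).add measurable_const)
    · refine Measurable.const_mul (Finset.measurable_sum _ (fun l _ => ?_)) _
      exact (CWAux.Srow_meas l).mul (Real.measurable_exp.comp ((CWAux.Srow_meas l).div_const 4))
  have hsqrtGint : Integrable (fun g => Real.sqrt (G g)) P := by
    refine ((integrable_const (1:ℝ)).add hGint).mono'
      ((Real.continuous_sqrt.measurable.comp hGmeas).aestronglyMeasurable) ?_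
    refine Filter.Eventually.of_forall (fun g => ?_)
    rw [Real.norm_eq_abs, abs_of_nonneg (Real.sqrt_nonneg _)]
    exact CWAux.sqrt_le_one_add (hG0 g)
  have hlinint : Integrable (fun g => dotp g eVec) P := by
    have : (fun g : Fin n × Fin M → ℝ => dotp g eVec)
        = fun g => ∑ p, g p * eVec p := by funext g; rw [dotp]
    rw [this]
    exact integrable_finset_sum _
      (fun p _ => (CWAux.integrable_single p (fun t => t) CWAux.integrable_id_γ).mul_const _)
  have hlin0 : ∫ g, dotp g eVec ∂P = 0 := by
    have e1 : (fun g : Fin n × Fin M → ℝ => dotp g eVec)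
        = fun g => ∑ p, g p * eVec p := by funext g; rw [dotp]
    rw [e1, integral_finset_sum _
      (fun p _ => (CWAux.integrable_single p (fun t => t) CWAux.integrable_id_γ).mul_const _)]
    have h2 : ∀ p : Fin n × Fin M, ∫ g : Fin n × Fin M → ℝ, g p * eVec p ∂P = 0 := by
      intro p
      rw [integral_mul_const]
      have h3 : (∫ g : Fin n × Fin M → ℝ, g p ∂P) = 0 :=
        (CWAux.integral_single p (fun t => t)).trans CWAux.integral_id_γ
      rw [h3, zero_mul]
    exact Finset.sum_eq_zero (fun p _ => h2 p)
  have hGval : ∫ g, G g ∂P ≤ s * (2*M + 2*lam^2) + s := by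
    have hint1 : Integrable (fun g => ∑ l ∈ T, (2 * CWAux.Srow l g + 2 * lam^2)) P :=
      integrable_finset_sum _
        (fun l _ => ((CWAux.integrable_Srow l).const_mul 2).add (integrable_const _))
    have hint2 : Integrable
        (fun g => ∑ l ∈ Tᶜ, CWAux.Srow l g * rexp (CWAux.Srow l g / 4)) P :=
      integrable_finset_sum _ (fun l _ => CWAux.integrable_Srow_exp l)
    have e0 : G = fun g => (∑ l ∈ T, (2 * CWAux.Srow l g + 2 * lam^2))
        + rexp (-(lam^2)/4) * ∑ l ∈ Tᶜ, CWAux.Srow l g * rexp (CWAux.Srow l g / 4) := rfl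
    have E1 : ∫ g, (∑ l ∈ T, (2 * CWAux.Srow l g + 2 * lam^2)) ∂P
        = ∑ l ∈ T, ∫ g, (2 * CWAux.Srow l g + 2 * lam^2) ∂P :=
      integral_finset_sum T
        (fun l _ => ((CWAux.integrable_Srow l).const_mul 2).add (integrable_const _))
    have E2 : ∫ g, (rexp (-(lam^2)/4) * ∑ l ∈ Tᶜ, CWAux.Srow l g * rexp (CWAux.Srow l g / 4)) ∂P
        = rexp (-(lam^2)/4) * ∑ l ∈ Tᶜ, ∫ g, CWAux.Srow l g * rexp (CWAux.Srow l g / 4) ∂P := by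
      rw [integral_const_mul]
      congr 1
      exact integral_finset_sum (Tᶜ) (fun l _ => CWAux.integrable_Srow_exp l)
    rw [e0, integral_add hint1 (hint2.const_mul _), E1, E2]
    have hterm1 : ∀ l ∈ T, (∫ g, (2 * CWAux.Srow l g + 2 * lam^2) ∂P)
        = 2 * M + 2 * lam^2 := by
      intro l _
      rw [integral_add ((CWAux.integrable_Srow l).const_mul 2) (integrable_const _),
        integral_const_mul, CWAux.integral_Srow, integral_const]
      simp
    have hterm2 : ∀ l ∈ (Tᶜ : Finset (Fin n)),
        (∫ g, CWAux.Srow l g * rexp (CWAux.Srow l g / 4) ∂P) = M * (2 * (Real.sqrt 2)^M) :=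
      fun l _ => CWAux.integral_Srow_exp l
    rw [Finset.sum_congr rfl hterm1, Finset.sum_congr rfl hterm2,
      Finset.sum_const, Finset.sum_const, hexplam]
    simp only [nsmul_eq_mul]
    have hMB : (M:ℝ) * (2 * (Real.sqrt 2)^M) = B := by rw [hBdef]; ring
    rw [hMB]
    have hc1 : (T.card : ℝ) * (2 * M + 2 * lam^2) ≤ s * (2*M + 2*lam^2) := by
      apply mul_le_mul_of_nonneg_right hTcard
      positivity
    have hc2 : (s:ℝ) / (n * B) * ((Tᶜ : Finset (Fin n)).card * B) ≤ s := by
      have he : (s:ℝ) / (n * B) * ((Tᶜ : Finset (Fin n)).card * B)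
          = s * (((Tᶜ : Finset (Fin n)).card : ℝ)/n) := by
        field_simp
      rw [he]
      calc (s:ℝ) * (((Tᶜ : Finset (Fin n)).card : ℝ)/n) ≤ s * 1 := by
            apply mul_le_mul_of_nonneg_left _ hs0.le
            rw [div_le_one hn0]; exact hTccard
      _ = s := mul_one _
    linarith only [hc1, hc2]
  by_cases hint : Integrable (fun g => sSup ((fun h => dotp g h) '' D)) P
  · have hWle : (∫ g, sSup ((fun h => dotp g h) '' D) ∂P) ≤ ∫ g, Real.sqrt (G g) ∂P :=
      integral_mono hint hsqrtGint hSup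
    have hW0 : 0 ≤ ∫ g, sSup ((fun h => dotp g h) '' D) ∂P := by
      rw [← hlin0]
      apply integral_mono hlinint hint
      intro g
      apply le_csSup
      · refine ⟨Real.sqrt (G g), ?_⟩
        rintro z ⟨y, hyD, rfl⟩
        exact hKey g y hyD
      · exact ⟨eVec, heD, rfl⟩
    have hsq2 : Integrable (fun g => Real.sqrt (G g) ^ 2) P :=
      hGint.congr (Filter.Eventually.of_forall fun g => (Real.sq_sqrt (hG0 g)).symm)
    have hCS2 : (∫ g, Real.sqrt (G g) ∂P)^2 ≤ ∫ g, G g ∂P := by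
      refine le_trans (CWAux.sq_integral_le hsqrtGint hsq2) (le_of_eq ?_)
      apply integral_congr_ae
      exact Filter.Eventually.of_forall fun g => Real.sq_sqrt (hG0 g)
    have hfinal : (∫ g, sSup ((fun h => dotp g h) '' D) ∂P)^2
        ≤ s * (2*M + 2*lam^2) + s :=
      le_trans (pow_le_pow_left₀ hW0 hWle 2) (le_trans hCS2 hGval)
    have hlog2n : 0 < 2 * (n:ℝ) / s := by positivity
    set L : ℝ := Real.log (2 * n / s) with hLdef
    have hsplitlog : Real.log ((n:ℝ) * B / s) = L + Real.log ((M:ℝ) * (Real.sqrt 2)^M) := by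
      rw [hLdef, ← Real.log_mul (ne_of_gt hlog2n) (by positivity)]
      congr 1
      rw [hBdef]
      field_simp
    have hlogM : Real.log (M:ℝ) ≤ M :=
      le_trans (Real.log_le_sub_one_of_pos (by positivity)) (by linarith only [])
    have hlogp : Real.log ((M:ℝ) * (Real.sqrt 2)^M) ≤ 2 * M := by
      rw [Real.log_mul (by positivity) (by positivity), Real.log_pow]
      have hs2le : Real.sqrt 2 ≤ 2 := by
        nlinarith only [Real.sq_sqrt (by norm_num : (0:ℝ) ≤ 2), Real.sqrt_nonneg 2]
      have h1 : Real.log (Real.sqrt 2) ≤ 1 :=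
        le_trans (Real.log_le_sub_one_of_pos (by positivity)) (by linarith only [hs2le])
      have h2 : (M:ℝ) * Real.log (Real.sqrt 2) ≤ (M:ℝ) * 1 :=
        mul_le_mul_of_nonneg_left h1 (by positivity)
      linarith only [hlogM, h2]
    have hlamle : lam^2 ≤ 4*L + 8*M := by
      rw [hlamsq, hsplitlog]; linarith only [hlogp]
    have hmaxM : (M:ℝ) ≤ max (M:ℝ) L := le_max_left _ _
    have hmaxL : L ≤ max (M:ℝ) L := le_max_right _ _
    have hmax1 : 1 ≤ max (M:ℝ) L := le_trans hMR hmaxM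
    calc (∫ g, sSup ((fun h => dotp g h) '' D) ∂P)^2
        ≤ s * (2*M + 2*lam^2) + s := hfinal
    _ ≤ 100 * s * max (M:ℝ) L := by
        have hmax0 : 0 ≤ max (M:ℝ) L := le_trans zero_le_one hmax1
        have hb1 : 2*(M:ℝ) + 2*lam^2 ≤ 26 * max (M:ℝ) L := by
          linarith only [hmaxM, hmaxL, hlamle]
        have hb2 : (s:ℝ)*(2*M+2*lam^2) ≤ s * (26 * max (M:ℝ) L) :=
          mul_le_mul_of_nonneg_left hb1 hs0.le
        have hb3 : (s:ℝ) ≤ s * max (M:ℝ) L := le_mul_of_one_le_right hs0.le hmax1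
        have hb4 : 0 ≤ (s:ℝ) * max (M:ℝ) L := mul_nonneg hs0.le hmax0
        linarith only [hb2, hb3, hb4]
  · rw [integral_undef hint]
    have h00 : (0:ℝ)^2 = 0 := by norm_num
    rw [h00]
    have hmaxnn : 0 ≤ max ((M:ℕ):ℝ) (Real.log (2*n/s)) :=
      le_trans (Nat.cast_nonneg M) (le_max_left _ _)
    have : (0:ℝ) ≤ 100 * (s:ℝ) := by positivity
    exact mul_nonneg this hmaxnn
end

section
/- Under the sub-Gaussian measurement model, let W = [w^1 ⋯ w^N] ∈ ℝ^{M×N} satisfy WᵀW = (M/N)·I_N, set A := [a^1 ⋯ a^M], Ã := A·W with columns ã^k = Σ_{j=1}^M w_{j,k}·a^j. Then for every k = 1, …, N: E[(⟨Ã, x_0·μ̃ᵀ⟩_F − y)·ã^k] = −Σ_{j=1}^M w_{j,k}·ρ^j. Consequently, the mismatch covariance of x_0·μ̃ᵀ with respect to (√(N/M)·Ã, √(N/M)·y) equals ρ(x_0·μ̃ᵀ; √(N/M)·Ã, √(N/M)·y) = (N·√N/M)·ρ_Hyb. -/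
open MeasureTheory ProbabilityTheory

open MeasureTheory ProbabilityTheory Finset in
private lemma dotp_expand {n2 M2 N2 : ℕ} (A : Fin M2 → Fin n2 → ℝ) (W : Fin M2 → Fin N2 → ℝ)
    (x0 : Fin n2 → ℝ) (μT : Fin N2 → ℝ) :
    dotp (fun q : Fin n2 × Fin N2 => ∑ j, W j q.2 * A j q.1)
      (fun q : Fin n2 × Fin N2 => x0 q.1 * μT q.2)
    = ∑ j, (∑ k', W j k' * μT k') * dotp (A j) x0 := by
  simp only [dotp, Fintype.sum_prod_type]
  calc ∑ q1 : Fin n2, ∑ q2 : Fin N2, (∑ j, W j q2 * A j q1) * (x0 q1 * μT q2)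
      = ∑ q1 : Fin n2, ∑ q2 : Fin N2, ∑ j, (W j q2 * μT q2) * (A j q1 * x0 q1) := by
        refine Finset.sum_congr rfl fun q1 _ => Finset.sum_congr rfl fun q2 _ => ?_
        rw [Finset.sum_mul]
        exact Finset.sum_congr rfl fun j _ => by ring
    _ = ∑ q1 : Fin n2, ∑ j, ∑ q2 : Fin N2, (W j q2 * μT q2) * (A j q1 * x0 q1) :=
        Finset.sum_congr rfl fun q1 _ => Finset.sum_comm
    _ = ∑ j, ∑ q1 : Fin n2, ∑ q2 : Fin N2, (W j q2 * μT q2) * (A j q1 * x0 q1) :=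
        Finset.sum_comm
    _ = ∑ j, (∑ k', W j k' * μT k') * ∑ m, A j m * x0 m := by
        refine Finset.sum_congr rfl fun j _ => ?_
        rw [Finset.sum_mul_sum, Finset.sum_comm]

private lemma dotp_smul_left {ι : Type*} [Fintype ι] (r : ℝ) (u v : ι → ℝ) :
    dotp (fun i => r * u i) v = r * dotp u v := by
  simp only [dotp, Finset.mul_sum]
  exact Finset.sum_congr rfl fun i _ => by ring

open MeasureTheory ProbabilityTheory in
private lemma claim_core {Ω : Type} [MeasurableSpace Ω] {M2 N2 : ℕ} (P : Measure Ω)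
    (S F A : Fin M2 → Ω → ℝ) (e : Ω → ℝ)
    (W : Fin M2 → Fin N2 → ℝ) (c μ ρ : Fin M2 → ℝ) (x0l : ℝ) (k : Fin N2)
    (hSa : ∀ j j', Integrable (fun ω => S j ω * A j' ω) P)
    (hFa : ∀ j j', Integrable (fun ω => F j ω * A j' ω) P)
    (hea : ∀ j', Integrable (fun ω => e ω * A j' ω) P)
    (hI1 : ∀ j j', ∫ ω, S j ω * A j' ω ∂P = if j = j' then x0l else 0)
    (hI2 : ∀ j j', ∫ ω, F j ω * A j' ω ∂P = if j = j' then ρ j + μ j * x0l else 0)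
    (hI3 : ∀ j', ∫ ω, e ω * A j' ω ∂P = 0)
    (hc : ∑ j, c j * W j k = ∑ j, W j k * μ j) :
    ∫ ω, ((∑ j, c j * S j ω) - (∑ j, F j ω + e ω)) * (∑ j, W j k * A j ω) ∂P
      = -∑ j, W j k * ρ j := by
  have hptw : ∀ ω : Ω,
      ((∑ j, c j * S j ω) - (∑ j, F j ω + e ω)) * (∑ j, W j k * A j ω)
      = (∑ j, ∑ j', (c j * W j' k) * (S j ω * A j' ω))
        - ((∑ j, ∑ j', W j' k * (F j ω * A j' ω))
          + (∑ j', W j' k * (e ω * A j' ω))) := by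
    intro ω
    rw [sub_mul, add_mul]
    congr 1
    · rw [Finset.sum_mul_sum]
      exact Finset.sum_congr rfl fun j _ => Finset.sum_congr rfl fun j' _ => by ring
    · congr 1
      · rw [Finset.sum_mul_sum]
        exact Finset.sum_congr rfl fun j _ => Finset.sum_congr rfl fun j' _ => by ring
      · rw [Finset.mul_sum]
        exact Finset.sum_congr rfl fun j' _ => by ring
  simp only [hptw]
  have HX : Integrable (fun ω => ∑ j, ∑ j', (c j * W j' k) * (S j ω * A j' ω)) P :=
    integrable_finset_sum _ fun j _ =>
      integrable_finset_sum _ fun j' _ => (hSa j j').const_mul _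
  have HY : Integrable (fun ω => ∑ j, ∑ j', W j' k * (F j ω * A j' ω)) P :=
    integrable_finset_sum _ fun j _ =>
      integrable_finset_sum _ fun j' _ => (hFa j j').const_mul _
  have HZ : Integrable (fun ω => ∑ j', W j' k * (e ω * A j' ω)) P :=
    integrable_finset_sum _ fun j' _ => (hea j').const_mul _
  have HYZ : Integrable (fun ω => (∑ j, ∑ j', W j' k * (F j ω * A j' ω))
      + ∑ j', W j' k * (e ω * A j' ω)) P := HY.add HZ
  rw [integral_sub HX HYZ, integral_add HY HZ]
  have EX : ∫ ω, ∑ j, ∑ j', (c j * W j' k) * (S j ω * A j' ω) ∂P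
      = ∑ j, (c j * W j k) * x0l := by
    rw [integral_finset_sum _ fun j _ =>
      integrable_finset_sum _ fun j' _ => (hSa j j').const_mul _]
    refine Finset.sum_congr rfl fun j _ => ?_
    rw [integral_finset_sum _ fun j' _ => (hSa j j').const_mul _]
    have h2 : ∀ j' : Fin M2, ∫ ω, (c j * W j' k) * (S j ω * A j' ω) ∂P
        = (c j * W j' k) * (if j = j' then x0l else 0) := fun j' => by
      rw [integral_const_mul, hI1 j j']
    rw [Finset.sum_congr rfl fun j' _ => h2 j']
    simp
  have EY : ∫ ω, ∑ j, ∑ j', W j' k * (F j ω * A j' ω) ∂P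
      = ∑ j, W j k * (ρ j + μ j * x0l) := by
    rw [integral_finset_sum _ fun j _ =>
      integrable_finset_sum _ fun j' _ => (hFa j j').const_mul _]
    refine Finset.sum_congr rfl fun j _ => ?_
    rw [integral_finset_sum _ fun j' _ => (hFa j j').const_mul _]
    have h2 : ∀ j' : Fin M2, ∫ ω, W j' k * (F j ω * A j' ω) ∂P
        = W j' k * (if j = j' then ρ j + μ j * x0l else 0) := fun j' => by
      rw [integral_const_mul, hI2 j j']
    rw [Finset.sum_congr rfl fun j' _ => h2 j']
    simp
  have EZ : ∫ ω, ∑ j', W j' k * (e ω * A j' ω) ∂P = 0 := by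
    rw [integral_finset_sum _ fun j' _ => (hea j').const_mul _]
    refine Finset.sum_eq_zero fun j' _ => ?_
    rw [integral_const_mul, hI3 j', mul_zero]
  rw [EX, EY, EZ, add_zero, ← Finset.sum_mul, hc, Finset.sum_mul,
    ← Finset.sum_sub_distrib, ← Finset.sum_neg_distrib]
  exact Finset.sum_congr rfl fun j _ => by ring


/-- mismatch covariance of the hybrid method. -/
theorem hybrid_mismatch_covariance
    (n M N : ℕ) (hn : 0 < n) (hM : 0 < M) (hN : 0 < N)
    (Ω : Type) (_ : MeasurableSpace Ω) (P : Measure Ω) (hP : IsProbabilityMeasure P)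
    (x0 : Fin n → ℝ) (hx0 : x0 ≠ 0)
    (f : Fin M → ℝ → ℝ) (hf : ∀ j, Measurable (f j))
    (κ ν : ℝ) (a : Fin M → Ω → (Fin n → ℝ)) (e : Ω → ℝ)
    (hameas : ∀ j, Measurable (a j)) (hemeas : Measurable e)
    (hamean : ∀ j k, ∫ ω, a j ω k ∂P = 0)
    (haiso : ∀ j, Isotropic P (a j))
    (hasub : ∀ j, sgNormVec P (a j) ≤ κ)
    (haindep : iIndepFun a P)
    (haeindep : IndepFun (fun ω j => a j ω) e P)
    (hemean : (∫ ω, e ω ∂P) = 0) (hesub : sgNorm P e ≤ ν)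
    (hfmean : ∀ j, ∫ ω, f j (dotp (a j ω) x0) ∂P = 0)
    -- integrability of all quantities entering the expectations below
    (heint : Integrable e P)
    (haint : ∀ j k, Integrable (fun ω => a j ω k) P)
    (haaint : ∀ j j' k l, Integrable (fun ω => a j ω k * a j' ω l) P)
    (heaint : ∀ j k, Integrable (fun ω => e ω * a j ω k) P)
    (hfint : ∀ j, Integrable (fun ω => f j (dotp (a j ω) x0)) P)
    (hfaint : ∀ j j' k, Integrable (fun ω => f j (dotp (a j ω) x0) * a j' ω k) P)
    (W : Fin M → Fin N → ℝ)
    (hW : ∀ k k', ∑ j, W j k * W j k' = if k = k' then (M : ℝ) / N else 0) :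
    -- scaling parameters, hybrid scaling vector, isotropy mismatch vectors
    (fun (μv : Fin M → ℝ) (μt : Fin N → ℝ) (ρvec : Fin M → Fin n → ℝ) =>
      -- first claim: E[(⟨Ã, x0 μ̃ᵀ⟩_F − y)·ã^k] = −∑_j W_{j,k}·ρ^j
      (∀ (k : Fin N) (l : Fin n),
          ∫ ω, (dotp (fun q : Fin n × Fin N => ∑ j, W j q.2 * a j ω q.1)
                  (fun q : Fin n × Fin N => x0 q.1 * μt q.2)
                - (∑ j, f j (dotp (a j ω) x0) + e ω))
              * (∑ j, W j k * a j ω l) ∂P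
            = -∑ j, W j k * ρvec j l) ∧
      -- second claim: the mismatch covariance equals (N√N/M)·ρ_Hyb
      enorm2 (fun p : Fin n × Fin N =>
          ∫ ω, (dotp (fun q : Fin n × Fin N =>
                    Real.sqrt ((N : ℝ) / M) * ∑ j, W j q.2 * a j ω q.1)
                  (fun q : Fin n × Fin N => x0 q.1 * μt q.2)
                - Real.sqrt ((N : ℝ) / M) * (∑ j, f j (dotp (a j ω) x0) + e ω))
              * (Real.sqrt ((N : ℝ) / M) * ∑ j, W j p.2 * a j ω p.1) ∂P)
        = ((N : ℝ) * Real.sqrt N / M) *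
            (Real.sqrt (∑ k : Fin N, ∑ l : Fin n, (∑ j, ρvec j l * W j k) ^ 2)
              / Real.sqrt N))
      (fun j => (∫ ω, f j (dotp (a j ω) x0) * dotp (a j ω) x0 ∂P) / enorm2 x0 ^ 2)
      (fun k => ((N : ℝ) / M) * ∑ j, W j k *
          ((∫ ω, f j (dotp (a j ω) x0) * dotp (a j ω) x0 ∂P) / enorm2 x0 ^ 2))
      (fun j l => ∫ ω, f j (dotp (a j ω) x0) *
          (a j ω l - (dotp (a j ω) x0 / enorm2 x0 ^ 2) * x0 l) ∂P) := by
  have haem : ∀ (j : Fin M) (l : Fin n), Measurable fun ω => a j ω l :=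
    fun j l => (measurable_pi_apply l).comp (hameas j)
  have hdm : Measurable fun v : Fin n → ℝ => dotp v x0 := by
    unfold dotp
    exact Finset.measurable_sum _ fun m _ => (measurable_pi_apply m).mul_const _
  have hSm : ∀ j, Measurable fun ω => dotp (a j ω) x0 := fun j => hdm.comp (hameas j)
  have hFm : ∀ j, Measurable fun ω => f j (dotp (a j ω) x0) := fun j => (hf j).comp (hSm j)
  have hFS_int : ∀ j, Integrable (fun ω => f j (dotp (a j ω) x0) * dotp (a j ω) x0) P := by
    intro j
    have h1 : (fun ω => f j (dotp (a j ω) x0) * dotp (a j ω) x0)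
        = fun ω => ∑ m, (f j (dotp (a j ω) x0) * a j ω m) * x0 m := by
      funext ω
      simp only [dotp, Finset.mul_sum]
      exact Finset.sum_congr rfl fun m _ => by ring
    rw [h1]
    exact integrable_finset_sum _ fun m _ => (hfaint j j m).mul_const _
  have hSa_int : ∀ (j j' : Fin M) (l : Fin n),
      Integrable (fun ω => dotp (a j ω) x0 * a j' ω l) P := by
    intro j j' l
    have h1 : (fun ω => dotp (a j ω) x0 * a j' ω l)
        = fun ω => ∑ m, x0 m * (a j ω m * a j' ω l) := by
      funext ω
      simp only [dotp, Finset.sum_mul]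
      exact Finset.sum_congr rfl fun m _ => by ring
    rw [h1]
    exact integrable_finset_sum _ fun m _ => (haaint j j' m l).const_mul _
  have hI1 : ∀ (l : Fin n) (j j' : Fin M),
      ∫ ω, dotp (a j ω) x0 * a j' ω l ∂P = if j = j' then x0 l else 0 := by
    intro l j j'
    by_cases h : j = j'
    · subst h
      rw [if_pos rfl]
      have h1 : (fun ω => dotp (a j ω) x0 * a j ω l)
          = fun ω => ∑ m, x0 m * (a j ω m * a j ω l) := by
        funext ω
        simp only [dotp, Finset.sum_mul]
        exact Finset.sum_congr rfl fun m _ => by ring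
      rw [h1, integral_finset_sum _ fun m _ => (haaint j j m l).const_mul _]
      have h2 : ∀ m : Fin n, ∫ ω, x0 m * (a j ω m * a j ω l) ∂P
          = x0 m * if m = l then 1 else 0 := fun m => by
        rw [integral_const_mul, haiso j m l]
      rw [Finset.sum_congr rfl fun m _ => h2 m]
      simp
    · rw [if_neg h]
      have hind : IndepFun (fun ω => dotp (a j ω) x0) (fun ω => a j' ω l) P :=
        (haindep.indepFun h).comp hdm (measurable_pi_apply l)
      rw [hind.integral_fun_mul_eq_mul_integral (hSm j).aestronglyMeasurable (haem j' l).aestronglyMeasurable,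
        hamean j' l, mul_zero]
  have hI2off : ∀ (l : Fin n) (j j' : Fin M), j ≠ j' →
      ∫ ω, f j (dotp (a j ω) x0) * a j' ω l ∂P = 0 := by
    intro l j j' h
    have hind : IndepFun (fun ω => f j (dotp (a j ω) x0)) (fun ω => a j' ω l) P :=
      (haindep.indepFun h).comp ((hf j).comp hdm) (measurable_pi_apply l)
    rw [hind.integral_fun_mul_eq_mul_integral (hFm j).aestronglyMeasurable (haem j' l).aestronglyMeasurable,
      hamean j' l, mul_zero]
  have hI2diag : ∀ (l : Fin n) (j : Fin M),
      ∫ ω, f j (dotp (a j ω) x0) * a j ω l ∂P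
        = (∫ ω, f j (dotp (a j ω) x0)
              * (a j ω l - (dotp (a j ω) x0 / enorm2 x0 ^ 2) * x0 l) ∂P)
          + ((∫ ω, f j (dotp (a j ω) x0) * dotp (a j ω) x0 ∂P) / enorm2 x0 ^ 2) * x0 l := by
    intro l j
    have h1 : (fun ω => f j (dotp (a j ω) x0)
          * (a j ω l - (dotp (a j ω) x0 / enorm2 x0 ^ 2) * x0 l))
        = fun ω => f j (dotp (a j ω) x0) * a j ω l
            - (x0 l / enorm2 x0 ^ 2) * (f j (dotp (a j ω) x0) * dotp (a j ω) x0) := by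
      funext ω; ring
    rw [h1, integral_sub (hfaint j j l) ((hFS_int j).const_mul _), integral_const_mul]
    ring
  have hI2' : ∀ (l : Fin n) (j j' : Fin M),
      ∫ ω, f j (dotp (a j ω) x0) * a j' ω l ∂P
        = if j = j' then
            (∫ ω, f j (dotp (a j ω) x0)
              * (a j ω l - (dotp (a j ω) x0 / enorm2 x0 ^ 2) * x0 l) ∂P)
            + ((∫ ω, f j (dotp (a j ω) x0) * dotp (a j ω) x0 ∂P) / enorm2 x0 ^ 2) * x0 l
          else 0 := by
    intro l j j'
    by_cases h : j = j'
    · subst h; rw [if_pos rfl]; exact hI2diag l j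
    · rw [if_neg h]; exact hI2off l j j' h
  have hI3 : ∀ (l : Fin n) (j' : Fin M), ∫ ω, e ω * a j' ω l ∂P = 0 := by
    intro l j'
    have hind : IndepFun (fun ω => a j' ω l) e P :=
      haeindep.comp
        (show Measurable fun m : Fin M → Fin n → ℝ => m j' l from
          (measurable_pi_apply l).comp (measurable_pi_apply j')) measurable_id
    have h1 := hind.integral_fun_mul_eq_mul_integral (haem j' l).aestronglyMeasurable hemeas.aestronglyMeasurable
    rw [hemean, mul_zero] at h1
    rw [show (fun ω => e ω * a j' ω l) = fun ω => a j' ω l * e ω from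
      funext fun ω => mul_comm _ _]
    exact h1
  have hM0 : (M : ℝ) ≠ 0 := Nat.cast_ne_zero.mpr hM.ne'
  have hN0 : (N : ℝ) ≠ 0 := Nat.cast_ne_zero.mpr hN.ne'
  have hWc : ∀ (μvec : Fin M → ℝ) (k : Fin N),
      ∑ j, (∑ k', W j k' * (((N : ℝ) / M) * ∑ j', W j' k' * μvec j')) * W j k
        = ∑ j, W j k * μvec j := by
    intro μvec k
    have h1 : ∑ j, (∑ k', W j k' * (((N : ℝ) / M) * ∑ j', W j' k' * μvec j')) * W j k
        = ∑ k', (∑ j, W j k' * W j k) * (((N : ℝ) / M) * ∑ j', W j' k' * μvec j') := by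
      simp only [Finset.sum_mul]
      rw [Finset.sum_comm]
      exact Finset.sum_congr rfl fun k' _ => Finset.sum_congr rfl fun j _ => by ring
    rw [h1, Finset.sum_congr rfl fun k' _ => by rw [hW k' k]]
    simp only [ite_mul, zero_mul, Finset.sum_ite_eq', Finset.mem_univ, if_true]
    rw [← mul_assoc, show (M : ℝ) / N * ((N : ℝ) / M) = 1 by field_simp, one_mul]
  have claim1 : ∀ (k : Fin N) (l : Fin n),
      ∫ ω, (dotp (fun q : Fin n × Fin N => ∑ j, W j q.2 * a j ω q.1)
              (fun q : Fin n × Fin N => x0 q.1 * (((N : ℝ) / M) * ∑ j, W j q.2 *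
                ((∫ ω, f j (dotp (a j ω) x0) * dotp (a j ω) x0 ∂P) / enorm2 x0 ^ 2)))
            - (∑ j, f j (dotp (a j ω) x0) + e ω))
          * (∑ j, W j k * a j ω l) ∂P
        = -∑ j, W j k * (∫ ω, f j (dotp (a j ω) x0) *
            (a j ω l - (dotp (a j ω) x0 / enorm2 x0 ^ 2) * x0 l) ∂P) := by
    intro k l
    have hdotp : ∀ ω : Ω,
        dotp (fun q : Fin n × Fin N => ∑ j, W j q.2 * a j ω q.1)
          (fun q : Fin n × Fin N => x0 q.1 * (((N : ℝ) / M) * ∑ j, W j q.2 *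
            ((∫ ω, f j (dotp (a j ω) x0) * dotp (a j ω) x0 ∂P) / enorm2 x0 ^ 2)))
        = ∑ j, (∑ k', W j k' * (((N : ℝ) / M) * ∑ j', W j' k' *
            ((∫ ω, f j' (dotp (a j' ω) x0) * dotp (a j' ω) x0 ∂P) / enorm2 x0 ^ 2)))
            * dotp (a j ω) x0 :=
      fun ω => dotp_expand (fun j => a j ω) W x0
        (fun k' => ((N : ℝ) / M) * ∑ j', W j' k' *
          ((∫ ω, f j' (dotp (a j' ω) x0) * dotp (a j' ω) x0 ∂P) / enorm2 x0 ^ 2))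
    simp only [hdotp]
    exact claim_core P (fun j ω => dotp (a j ω) x0)
      (fun j ω => f j (dotp (a j ω) x0)) (fun j ω => a j ω l) e W
      (fun j => ∑ k', W j k' * (((N : ℝ) / M) * ∑ j', W j' k' *
        ((∫ ω, f j' (dotp (a j' ω) x0) * dotp (a j' ω) x0 ∂P) / enorm2 x0 ^ 2)))
      (fun j => (∫ ω, f j (dotp (a j ω) x0) * dotp (a j ω) x0 ∂P) / enorm2 x0 ^ 2)
      (fun j => ∫ ω, f j (dotp (a j ω) x0) *
        (a j ω l - (dotp (a j ω) x0 / enorm2 x0 ^ 2) * x0 l) ∂P)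
      (x0 l) k
      (fun j j' => hSa_int j j' l) (fun j j' => hfaint j j' l) (fun j' => heaint j' l)
      (hI1 l) (hI2' l) (hI3 l)
      (hWc (fun j => (∫ ω, f j (dotp (a j ω) x0) * dotp (a j ω) x0 ∂P) / enorm2 x0 ^ 2) k)
  have hNM : (0:ℝ) ≤ (N : ℝ) / M := by positivity
  have hrr : Real.sqrt ((N : ℝ) / M) * Real.sqrt ((N : ℝ) / M) = (N : ℝ) / M :=
    Real.mul_self_sqrt hNM
  have claim2 :
      enorm2 (fun p : Fin n × Fin N =>
          ∫ ω, (dotp (fun q : Fin n × Fin N =>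
                    Real.sqrt ((N : ℝ) / M) * ∑ j, W j q.2 * a j ω q.1)
                  (fun q : Fin n × Fin N => x0 q.1 * (((N : ℝ) / M) * ∑ j, W j q.2 *
                    ((∫ ω, f j (dotp (a j ω) x0) * dotp (a j ω) x0 ∂P) / enorm2 x0 ^ 2)))
                - Real.sqrt ((N : ℝ) / M) * (∑ j, f j (dotp (a j ω) x0) + e ω))
              * (Real.sqrt ((N : ℝ) / M) * ∑ j, W j p.2 * a j ω p.1) ∂P)
        = ((N : ℝ) * Real.sqrt N / M) *
            (Real.sqrt (∑ k : Fin N, ∑ l : Fin n, (∑ j,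
                (∫ ω, f j (dotp (a j ω) x0) *
                  (a j ω l - (dotp (a j ω) x0 / enorm2 x0 ^ 2) * x0 l) ∂P) * W j k) ^ 2)
              / Real.sqrt N) := by
    have hval : ∀ p : Fin n × Fin N,
        (∫ ω, (dotp (fun q : Fin n × Fin N =>
                  Real.sqrt ((N : ℝ) / M) * ∑ j, W j q.2 * a j ω q.1)
                (fun q : Fin n × Fin N => x0 q.1 * (((N : ℝ) / M) * ∑ j, W j q.2 *
                  ((∫ ω, f j (dotp (a j ω) x0) * dotp (a j ω) x0 ∂P) / enorm2 x0 ^ 2)))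
              - Real.sqrt ((N : ℝ) / M) * (∑ j, f j (dotp (a j ω) x0) + e ω))
            * (Real.sqrt ((N : ℝ) / M) * ∑ j, W j p.2 * a j ω p.1) ∂P)
        = ((N : ℝ) / M) * -∑ j, W j p.2 *
            (∫ ω, f j (dotp (a j ω) x0) *
              (a j ω p.1 - (dotp (a j ω) x0 / enorm2 x0 ^ 2) * x0 p.1) ∂P) := by
      intro p
      have hptw : ∀ ω : Ω,
          (dotp (fun q : Fin n × Fin N =>
                Real.sqrt ((N : ℝ) / M) * ∑ j, W j q.2 * a j ω q.1)
              (fun q : Fin n × Fin N => x0 q.1 * (((N : ℝ) / M) * ∑ j, W j q.2 *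
                ((∫ ω, f j (dotp (a j ω) x0) * dotp (a j ω) x0 ∂P) / enorm2 x0 ^ 2)))
            - Real.sqrt ((N : ℝ) / M) * (∑ j, f j (dotp (a j ω) x0) + e ω))
          * (Real.sqrt ((N : ℝ) / M) * ∑ j, W j p.2 * a j ω p.1)
          = ((N : ℝ) / M) *
            ((dotp (fun q : Fin n × Fin N => ∑ j, W j q.2 * a j ω q.1)
              (fun q : Fin n × Fin N => x0 q.1 * (((N : ℝ) / M) * ∑ j, W j q.2 *
                ((∫ ω, f j (dotp (a j ω) x0) * dotp (a j ω) x0 ∂P) / enorm2 x0 ^ 2)))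
            - (∑ j, f j (dotp (a j ω) x0) + e ω))
          * (∑ j, W j p.2 * a j ω p.1)) := by
        intro ω
        have hdot2 :
            dotp (fun q : Fin n × Fin N =>
                Real.sqrt ((N : ℝ) / M) * ∑ j, W j q.2 * a j ω q.1)
              (fun q : Fin n × Fin N => x0 q.1 * (((N : ℝ) / M) * ∑ j, W j q.2 *
                ((∫ ω, f j (dotp (a j ω) x0) * dotp (a j ω) x0 ∂P) / enorm2 x0 ^ 2)))
            = Real.sqrt ((N : ℝ) / M) *
              dotp (fun q : Fin n × Fin N => ∑ j, W j q.2 * a j ω q.1)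
                (fun q : Fin n × Fin N => x0 q.1 * (((N : ℝ) / M) * ∑ j, W j q.2 *
                  ((∫ ω, f j (dotp (a j ω) x0) * dotp (a j ω) x0 ∂P) / enorm2 x0 ^ 2))) :=
          dotp_smul_left _ _ _
        rw [hdot2]
        generalize Real.sqrt ((N : ℝ) / M) = s at hrr ⊢
        rw [← hrr]
        ring
      simp only [hptw]
      rw [integral_const_mul, claim1 p.2 p.1]
    simp only [hval]
    rw [enorm2]
    have h1 : ∑ p : Fin n × Fin N, (((N : ℝ) / M) * -∑ j, W j p.2 *
          (∫ ω, f j (dotp (a j ω) x0) *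
            (a j ω p.1 - (dotp (a j ω) x0 / enorm2 x0 ^ 2) * x0 p.1) ∂P)) ^ 2
        = ((N : ℝ) / M) ^ 2 * ∑ k : Fin N, ∑ l : Fin n, (∑ j,
            (∫ ω, f j (dotp (a j ω) x0) *
              (a j ω l - (dotp (a j ω) x0 / enorm2 x0 ^ 2) * x0 l) ∂P) * W j k) ^ 2 := by
      simp only [Finset.mul_sum, Fintype.sum_prod_type]
      rw [Finset.sum_comm]
      refine Finset.sum_congr rfl fun k _ => Finset.sum_congr rfl fun l _ => ?_
      rw [show (∑ j, W j k * (∫ ω, f j (dotp (a j ω) x0) *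
            (a j ω l - (dotp (a j ω) x0 / enorm2 x0 ^ 2) * x0 l) ∂P))
          = ∑ j, (∫ ω, f j (dotp (a j ω) x0) *
            (a j ω l - (dotp (a j ω) x0 / enorm2 x0 ^ 2) * x0 l) ∂P) * W j k from
        Finset.sum_congr rfl fun j _ => mul_comm _ _]
      ring
    rw [h1, Real.sqrt_mul (by positivity), Real.sqrt_sq hNM]
    have hsN : Real.sqrt (N : ℝ) ≠ 0 := by
      refine ne_of_gt (Real.sqrt_pos.mpr ?_)
      exact_mod_cast hN
    field_simp
  exact ⟨claim1, claim2⟩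
end

section
/- There exists a numerical constant C > 0 such that for every standard Gaussian random vector g ~ N(0, I_M) in ℝ^M and every τ ≥ √(2M), the expected squared positive excess of the norm satisfies E[ (max{‖g‖₂ − τ, 0})² ] ≤ C · exp(−(τ − √(2M))²/2). -/
open MeasureTheory ProbabilityTheory

section AuxGNE

open Real

private lemma gne_gauss_exp_aux (c : ℝ) (hc : c < 1/2) :
    Integrable (fun x => Real.exp (c * x^2)) (gaussianReal 0 1) ∧
    ∫ x, Real.exp (c * x^2) ∂(gaussianReal 0 1) = (Real.sqrt (1 - 2*c))⁻¹ := by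
  have hb : 0 < 1/2 - c := by linarith
  have hπ := Real.pi_pos
  set f : ℝ → NNReal := fun x => Real.toNNReal (gaussianPDFReal 0 1 x) with hf
  have hfm : Measurable f := (measurable_gaussianPDFReal 0 1).real_toNNReal
  have hgauss : gaussianReal 0 1 = volume.withDensity (fun x => (f x : ENNReal)) := by
    rw [gaussianReal_of_var_ne_zero 0 one_ne_zero]; rfl
  have hpt : ∀ x : ℝ, f x • Real.exp (c * x^2)
      = (Real.sqrt (2*π))⁻¹ * Real.exp (-(1/2 - c) * x^2) := by
    intro x
    rw [NNReal.smul_def, smul_eq_mul, hf]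
    rw [Real.coe_toNNReal _ (gaussianPDFReal_nonneg 0 1 x)]
    simp only [gaussianPDFReal, NNReal.coe_one, mul_one, sub_zero]
    rw [mul_assoc, ← Real.exp_add]
    ring_nf
  have hint : Integrable (fun x => (Real.sqrt (2*π))⁻¹ * Real.exp (-(1/2-c) * x^2)) volume :=
    (integrable_exp_neg_mul_sq hb).const_mul _
  constructor
  · rw [hgauss, integrable_withDensity_iff_integrable_smul hfm]
    exact hint.congr (Filter.Eventually.of_forall fun x => (hpt x).symm)
  · rw [hgauss, integral_withDensity_eq_integral_smul hfm]
    calc ∫ x, f x • Real.exp (c*x^2)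
        = ∫ x, (Real.sqrt (2*π))⁻¹ * Real.exp (-(1/2-c) * x^2) := by
          exact integral_congr_ae (Filter.Eventually.of_forall hpt)
      _ = (Real.sqrt (2*π))⁻¹ * Real.sqrt (π / (1/2 - c)) := by
          rw [integral_const_mul, integral_gaussian]
      _ = (Real.sqrt (1 - 2*c))⁻¹ := by
          rw [← Real.sqrt_inv, ← Real.sqrt_mul (by positivity), ← Real.sqrt_inv]
          have hne : (1:ℝ)/2 - c ≠ 0 := ne_of_gt hb
          have hπne : π ≠ 0 := ne_of_gt hπ
          congr 1
          rw [show (1:ℝ) - 2*c = 2*(1/2-c) by ring, mul_inv, mul_inv,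
            div_eq_mul_inv]
          have hne2 : (1:ℝ) - 2*c ≠ 0 := by intro h; apply hne; linarith
          field_simp

private lemma gne_pi_exp_int (M : ℕ) {f : ℝ → ℝ} (hi : Integrable f (gaussianReal 0 1)) :
    Integrable (fun x : Fin M → ℝ => ∏ i, f (x i)) (stdGaussian (Fin M)) ∧
    ∫ x : Fin M → ℝ, ∏ i, f (x i) ∂(stdGaussian (Fin M))
      = (∫ x, f x ∂(gaussianReal 0 1)) ^ M := by
  letI : MeasureSpace ℝ := { volume := gaussianReal 0 1 }
  haveI : SigmaFinite (volume : Measure ℝ) :=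
    (inferInstance : SigmaFinite (gaussianReal 0 1))
  have h1 : stdGaussian (Fin M) = (volume : Measure (Fin M → ℝ)) := rfl
  constructor
  · rw [h1]
    exact Integrable.fintype_prod (f := fun _ : Fin M => f) (fun _ => hi)
  · rw [h1]
    have := MeasureTheory.integral_fintype_prod_eq_pow (ι := Fin M) f (μ := gaussianReal 0 1)
    simp only [Fintype.card_fin] at this
    exact this

private lemma gne_ptwise_bound {lam τ s : ℝ} (hl : 1/4 ≤ lam) (hτ : 0 ≤ τ) :
    (max (s - τ) 0)^2 ≤ 4 * Real.exp (lam * (s^2 - τ^2)) := by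
  rcases le_or_gt s τ with h | h
  · rw [max_eq_right (by linarith)]
    have := Real.exp_pos (lam * (s^2 - τ^2))
    nlinarith
  · rw [max_eq_left (by linarith)]
    have h1 : (s - τ)^2 ≤ s^2 - τ^2 := by nlinarith
    have h2 : (s-τ)^2/4 ≤ lam * (s^2 - τ^2) := by nlinarith
    have h3 := Real.add_one_le_exp (lam * (s^2 - τ^2))
    nlinarith [Real.exp_pos (lam * (s^2 - τ^2))]

end AuxGNE


/-- expected squared positive excess of the Gaussian norm. -/
theorem gaussian_norm_excess :
    ∃ C : ℝ, 0 < C ∧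
    ∀ (M : ℕ) (τ : ℝ), Real.sqrt (2 * M) ≤ τ →
    ∫ g, (max (enorm2 g - τ) 0) ^ 2 ∂(stdGaussian (Fin M))
      ≤ C * Real.exp (-(τ - Real.sqrt (2 * M)) ^ 2 / 2) := by
  refine ⟨4, by norm_num, ?_⟩
  intro M τ hτ
  have hτ0 : 0 ≤ τ := le_trans (Real.sqrt_nonneg _) hτ
  rcases Nat.eq_zero_or_pos M with hM | hM
  · subst hM
    have he : ∀ g : Fin 0 → ℝ, (max (enorm2 g - τ) 0)^2 = 0 := by
      intro g
      have h0 : enorm2 g = 0 := by simp [enorm2]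
      rw [h0, max_eq_right (by linarith)]
      ring
    have : ∫ g, (max (enorm2 g - τ) 0) ^ 2 ∂(stdGaussian (Fin 0)) = 0 := by
      rw [integral_congr_ae (Filter.Eventually.of_forall he), integral_zero]
    rw [this]
    positivity
  · set a := Real.sqrt (2*(M:ℝ)) with ha
    have hMpos : (0:ℝ) < M := by exact_mod_cast hM
    have hM1 : (1:ℝ) ≤ M := by exact_mod_cast hM
    have ha2 : a^2 = 2*M := Real.sq_sqrt (by positivity)
    have hapos : 0 < a := Real.sqrt_pos.mpr (by positivity)
    have hτpos : 0 < τ := lt_of_lt_of_le hapos hτ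
    have hτ2 : 2*(M:ℝ) ≤ τ^2 := by nlinarith
    have hτ2pos : 0 < τ^2 := by positivity
    set lam := (1 - (M:ℝ)/τ^2)/2 with hlam
    have hdiv : (M:ℝ)/τ^2 ≤ 1/2 := by rw [div_le_iff₀ hτ2pos]; linarith
    have hdivpos : 0 < (M:ℝ)/τ^2 := by positivity
    have hlam4 : 1/4 ≤ lam := by rw [hlam]; linarith
    have hlam2 : lam < 1/2 := by rw [hlam]; linarith
    obtain ⟨hInt1, hIval⟩ := gne_gauss_exp_aux lam hlam2
    obtain ⟨hIntP, hPval⟩ :=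
      gne_pi_exp_int M (f := fun t => Real.exp (lam * t^2)) hInt1
    have hpt : ∀ g : Fin M → ℝ, (max (enorm2 g - τ) 0)^2
        ≤ (4 * Real.exp (-(lam * τ^2))) * ∏ i, Real.exp (lam * (g i)^2) := by
      intro g
      have hs2 : (enorm2 g)^2 = ∑ i, (g i)^2 := Real.sq_sqrt (by positivity)
      refine le_trans (gne_ptwise_bound hlam4 hτ0) (le_of_eq ?_)
      rw [hs2, ← Real.exp_sum, mul_assoc, ← Real.exp_add, ← Finset.mul_sum]
      congr 1
      ring
    have hIntG : Integrable (fun g : Fin M → ℝ =>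
        (4 * Real.exp (-(lam * τ^2))) * ∏ i, Real.exp (lam * (g i)^2))
        (stdGaussian (Fin M)) := hIntP.const_mul _
    have hmono := integral_mono_of_nonneg (μ := stdGaussian (Fin M))
      (f := fun g => (max (enorm2 g - τ) 0)^2)
      (Filter.Eventually.of_forall fun g => by positivity) hIntG
      (Filter.Eventually.of_forall hpt)
    refine le_trans hmono ?_
    rw [integral_const_mul, hPval, hIval]
    clear hmono hIntG hpt hPval hIntP hIval hInt1
    -- analytic endgame
    set sM := Real.sqrt (M:ℝ) with hsM
    have hsM2 : sM^2 = M := Real.sq_sqrt hMpos.le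
    have hsMpos : 0 < sM := Real.sqrt_pos.mpr hMpos
    have h12 : 1 - 2*lam = (M:ℝ)/τ^2 := by rw [hlam]; ring
    have hsq : Real.sqrt ((M:ℝ)/τ^2) = sM / τ := by
      rw [Real.sqrt_div hMpos.le, Real.sqrt_sq hτpos.le]
    have hinv : (Real.sqrt (1 - 2*lam))⁻¹ = τ / sM := by
      rw [h12, hsq, inv_div]
    rw [hinv]
    set s2 := Real.sqrt 2 with hs2
    have hs22 : s2^2 = 2 := Real.sq_sqrt (by norm_num)
    have hs2pos : 0 < s2 := Real.sqrt_pos.mpr (by norm_num)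
    have hs2ge : 1 ≤ s2 := by nlinarith
    have hs2le : s2 ≤ 3/2 := by nlinarith
    have haval : a = s2 * sM := by rw [ha, hs2, hsM, ← Real.sqrt_mul (by norm_num)]
    have hτa : s2 * sM ≤ τ := by rw [← haval]; exact hτ
    have hlamτ : lam * τ^2 = (τ^2 - M)/2 := by
      rw [hlam]; field_simp
    clear_value lam a sM s2
    have hMdiv : (M:ℝ) * (τ/sM) = sM * τ := by
      field_simp
      linear_combination -hsM2
    clear hdiv hdivpos hsq hinv h12 hlam hs2 hsM ha hlam4 hlam2 hs2pos hapos hτ hτ2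
    have key1 : τ/sM ≤ Real.exp (τ/sM - 1) := by
      have := Real.add_one_le_exp (τ/sM - 1); linarith
    have key2 : (τ/sM)^M ≤ Real.exp ((M:ℝ) * (τ/sM - 1)) := by
      rw [Real.exp_nat_mul]
      exact pow_le_pow_left₀ (div_nonneg hτ0 hsMpos.le) key1 M
    have key3 : (M:ℝ)*(τ/sM - 1) ≤ lam*τ^2 - (τ - a)^2/2 := by
      have hkey : (1/2:ℝ) * (M:ℝ) ≤ (s2 - 1) * sM * τ := by
        nlinarith [mul_le_mul_of_nonneg_left hτa
          (mul_nonneg (by linarith : (0:ℝ) ≤ s2 - 1) hsMpos.le)]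
      nlinarith [hkey, hMdiv, hlamτ, haval, ha2]
    calc 4 * Real.exp (-(lam * τ^2)) * (τ/sM)^M
        ≤ 4 * Real.exp (-(lam * τ^2)) * Real.exp (lam*τ^2 - (τ - a)^2/2) := by
          apply mul_le_mul_of_nonneg_left
            (le_trans key2 (Real.exp_le_exp.mpr key3)) (by positivity)
      _ = 4 * Real.exp (-(τ - a)^2/2) := by
          rw [mul_assoc, ← Real.exp_add]
          congr 2
          ring
end
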